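/- arXiv:2102.11711 — 12 statements merged into one kernel-verified Lean document; each statement's English description precedes it below -/
import Mathlib

section
/- Let α ∈ (0,1) and τ > 0. If λ₁ > 0 is a real zero of f(p) = 1 − α e^{−τp} − p, then α τ e^{−τλ₁} < 1, and if λ₂ < 0 is a real zero of f, then α τ e^{−τλ₂} > 1. In particular, α τ e^{−τλ} ≠ 1 at every real zero λ of f, i.e. f'(λ) ≠ 0, so the real characteristic roots λ₁ and λ₂ are simple and the denominators α τ e^{−τλᵢ} − 1 appearing in the spectral projector formula are nonzero. -/
/-- The real characteristic function of the Suarez–Schopf model at the zero equilibrium: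
`f p = 1 - α * exp (-τ * p) - p`. -/
noncomputable def SSchar (α τ p : ℝ) : ℝ := 1 - α * Real.exp (-τ * p) - p

lemma ss_pos_aux (α τ : ℝ) (hα : α ∈ Set.Ioo (0 : ℝ) 1) (hτ : 0 < τ)
    (l : ℝ) (hl : 0 < l) (hz : SSchar α τ l = 0) :
    α * τ * Real.exp (-τ * l) < 1 := by
  obtain ⟨hα0, hα1⟩ := hα
  have h1 : α * Real.exp (-τ * l) = 1 - l := by
    unfold SSchar at hz; linarith
  have hE : 0 < Real.exp (-τ * l) := Real.exp_pos _
  have h1l : 0 < 1 - l := by nlinarith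
  -- 1 - l < exp (-τ l)
  have h2 : 1 - l < Real.exp (-τ * l) := by nlinarith
  have h3 : Real.log (1 - l) < -τ * l := (Real.log_lt_iff_lt_exp h1l).mpr h2
  have h4 : Real.log (1 - l)⁻¹ ≤ (1 - l)⁻¹ - 1 :=
    Real.log_le_sub_one_of_pos (inv_pos.mpr h1l)
  rw [Real.log_inv] at h4
  have h5 : (1 - l) * (1 - l)⁻¹ = 1 := mul_inv_cancel₀ (ne_of_gt h1l)
  -- multiply h4 by (1-l) > 0 : -(1-l) log(1-l) ≤ 1 - (1-l) = l
  have h6 : (1 - l) * (-Real.log (1 - l)) ≤ (1 - l) * ((1 - l)⁻¹ - 1) :=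
    mul_le_mul_of_nonneg_left h4 (le_of_lt h1l)
  have h7 : (1 - l) * (-Real.log (1 - l)) ≤ l := by
    calc (1 - l) * (-Real.log (1 - l)) ≤ (1 - l) * ((1 - l)⁻¹ - 1) := h6
      _ = 1 - (1 - l) := by rw [mul_sub, h5]; ring
      _ = l := by ring
  -- τ l < -log(1-l), so τ l (1-l) < l, so τ(1-l) < 1
  have h8 : τ * l * (1 - l) < l := by nlinarith
  have h9 : τ * (1 - l) < 1 := by nlinarith
  calc α * τ * Real.exp (-τ * l) = τ * (α * Real.exp (-τ * l)) := by ring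
    _ = τ * (1 - l) := by rw [h1]
    _ < 1 := h9

lemma ss_neg_aux (α τ : ℝ) (hα : α ∈ Set.Ioo (0 : ℝ) 1) (hτ : 0 < τ)
    (l : ℝ) (hl : l < 0) (hz : SSchar α τ l = 0) :
    1 < α * τ * Real.exp (-τ * l) := by
  obtain ⟨hα0, hα1⟩ := hα
  have h1 : α * Real.exp (-τ * l) = 1 - l := by
    unfold SSchar at hz; linarith
  have hE : 0 < Real.exp (-τ * l) := Real.exp_pos _
  have h1l : 0 < 1 - l := by linarith
  have h2 : 1 - l < Real.exp (-τ * l) := by nlinarith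
  have h3 : Real.log (1 - l) < -τ * l := (Real.log_lt_iff_lt_exp h1l).mpr h2
  have h4 : Real.log (1 - l)⁻¹ ≤ (1 - l)⁻¹ - 1 :=
    Real.log_le_sub_one_of_pos (inv_pos.mpr h1l)
  rw [Real.log_inv] at h4
  have h5 : (1 - l) * (1 - l)⁻¹ = 1 := mul_inv_cancel₀ (ne_of_gt h1l)
  -- 1 - (1-l)⁻¹ ≤ log(1-l), multiply by (1-l): (1-l) - 1 ≤ (1-l) log(1-l)
  have h6 : (1 - l) * (1 - (1 - l)⁻¹) ≤ (1 - l) * Real.log (1 - l) :=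
    mul_le_mul_of_nonneg_left (by linarith) (le_of_lt h1l)
  have h7 : -l ≤ (1 - l) * Real.log (1 - l) := by
    have : (1 - l) * (1 - (1 - l)⁻¹) = (1 - l) - 1 := by rw [mul_sub, h5]; ring
    nlinarith
  -- from h3: log(1-l) < -τ l, and l < 0, so (1-l) log(1-l) < (1-l)(-τ l)
  have h8 : (1 - l) * Real.log (1 - l) < (1 - l) * (-τ * l) :=
    mul_lt_mul_of_pos_left h3 h1l
  have h9 : 1 < τ * (1 - l) := by nlinarith
  calc (1 : ℝ) < τ * (1 - l) := h9
    _ = τ * (α * Real.exp (-τ * l)) := by rw [h1]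
    _ = α * τ * Real.exp (-τ * l) := by ring

/-- Let `α ∈ (0,1)`, `τ > 0`. At a positive real zero `λ₁` of `f` one has `ατ e^{-τλ₁} < 1`,
at a negative real zero `λ₂` one has `ατ e^{-τλ₂} > 1`; in particular `ατ e^{-τλ} ≠ 1`
(i.e. `f'(λ) ≠ 0`) at every real zero `λ`, so the real characteristic roots are simple and
the denominators `ατ e^{-τλᵢ} - 1` of the spectral projector are nonzero. -/
theorem suarez_schopf_real_roots_simple (α τ : ℝ) (hα : α ∈ Set.Ioo (0 : ℝ) 1) (hτ : 0 < τ) :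
    (∀ l : ℝ, 0 < l → SSchar α τ l = 0 → α * τ * Real.exp (-τ * l) < 1) ∧
    (∀ l : ℝ, l < 0 → SSchar α τ l = 0 → 1 < α * τ * Real.exp (-τ * l)) ∧
    (∀ l : ℝ, SSchar α τ l = 0 →
      α * τ * Real.exp (-τ * l) ≠ 1 ∧ α * τ * Real.exp (-τ * l) - 1 ≠ 0) := by
  refine ⟨fun l hl hz => ss_pos_aux α τ hα hτ l hl hz,
    fun l hl hz => ss_neg_aux α τ hα hτ l hl hz, fun l hz => ?_⟩
  have hne : α * τ * Real.exp (-τ * l) ≠ 1 := by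
    rcases lt_trichotomy l 0 with h | h | h
    · exact ne_of_gt (ss_neg_aux α τ hα hτ l h hz)
    · exfalso
      have : SSchar α τ 0 = 1 - α := by simp [SSchar]
      rw [h] at hz
      rw [hz] at this
      exact absurd this.symm (by linarith [hα.2])
    · exact ne_of_lt (ss_pos_aux α τ hα hτ l h hz)
  exact ⟨hne, sub_ne_zero_of_ne hne⟩
end

section
/- Let α ∈ (0,1) and τ > 0, and let λ₂ < 0 be the unique negative real zero of f(p) = 1 − α e^{−τp} − p. Then every nonreal complex root p ∈ ℂ of the characteristic equation 1 − α e^{−τp} − p = 0 satisfies Re p < λ₂. In particular, the characteristic equation has exactly one root (namely the positive real root λ₁) with positive real part. -/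
/-- The complex characteristic function of the Suarez–Schopf model at the zero equilibrium:
`p ↦ 1 - α * exp (-τ * p) - p`, `p ∈ ℂ`. -/
noncomputable def SScharC (α τ : ℝ) (p : ℂ) : ℂ :=
  1 - (α : ℂ) * Complex.exp (-(τ : ℂ) * p) - p

private lemma abs_sin_lt_of_pos {t : ℝ} (ht : 0 < t) : |Real.sin t| < t := by
  rcases le_or_gt t 1 with h1 | h1
  · have hπ : t < Real.pi := by nlinarith [Real.pi_gt_three]
    have hs : 0 < Real.sin t := Real.sin_pos_of_pos_of_lt_pi ht hπ
    rw [abs_of_pos hs]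
    exact Real.sin_lt ht
  · exact lt_of_le_of_lt (abs_le.2 ⟨Real.neg_one_le_sin t, Real.sin_le_one t⟩) h1

private lemma abs_sin_lt {t : ℝ} (ht : t ≠ 0) : |Real.sin t| < |t| := by
  rcases ht.lt_or_gt with h | h
  · have := abs_sin_lt_of_pos (t := -t) (by linarith)
    rw [Real.sin_neg, abs_neg] at this
    rwa [abs_of_neg h]
  · rw [abs_of_pos h]; exact abs_sin_lt_of_pos h

private lemma ss_hasDerivAt (α τ x : ℝ) :
    HasDerivAt (fun t : ℝ => 1 - α * Real.exp (-τ * t) - t) (α * τ * Real.exp (-τ * x) - 1) x := by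
  have h1 : HasDerivAt (fun t : ℝ => -τ * t) (-τ) x := by
    simpa using (hasDerivAt_id x).const_mul (-τ)
  have h2 : HasDerivAt (fun t : ℝ => Real.exp (-τ * t)) (Real.exp (-τ * x) * -τ) x :=
    (Real.hasDerivAt_exp (-τ * x)).comp x h1
  have h3 := ((hasDerivAt_const x (1:ℝ)).sub (h2.const_mul α)).sub (hasDerivAt_id x)
  exact h3.congr_deriv (by ring)

private lemma ss_mvt (α τ a b : ℝ) (hab : a < b) :
    ∃ c ∈ Set.Ioo a b, α * τ * Real.exp (-τ * c) - 1 =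
      ((1 - α * Real.exp (-τ * b) - b) - (1 - α * Real.exp (-τ * a) - a)) / (b - a) := by
  apply exists_hasDerivAt_eq_slope _ _ hab
  · exact (by fun_prop : Continuous fun t : ℝ => 1 - α * Real.exp (-τ * t) - t).continuousOn
  · intro x _
    exact ss_hasDerivAt α τ x

private lemma SScharC_real (α τ x : ℝ) :
    SScharC α τ (x : ℂ) = ((1 - α * Real.exp (-τ * x) - x : ℝ) : ℂ) := by
  unfold SScharC
  rw [show -(τ:ℂ)*(x:ℂ) = ((-τ*x : ℝ):ℂ) by push_cast; ring, ← Complex.ofReal_exp]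
  push_cast; ring

/-- If `f x < 0` and `α τ e^{-τ x} > 1`, then `x < l₂`, where `f l₂ = 0`. -/
private lemma lt_of_neg_of_deriv_pos {α τ l₂ x : ℝ} (hα : 0 < α) (hτ : 0 < τ)
    (hzero : 1 - α * Real.exp (-τ * l₂) - l₂ = 0)
    (hfx : 1 - α * Real.exp (-τ * x) - x < 0)
    (hdx : 1 < α * τ * Real.exp (-τ * x)) : x < l₂ := by
  by_contra hle
  push_neg at hle
  rcases eq_or_lt_of_le hle with rfl | hlt
  · linarith
  · obtain ⟨c, hc, hceq⟩ := ss_mvt α τ l₂ x hlt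
    rw [hzero] at hceq
    have hslope : ((1 - α * Real.exp (-τ * x) - x) - 0) / (x - l₂) < 0 :=
      div_neg_of_neg_of_pos (by linarith) (by linarith)
    have hcx : Real.exp (-τ * x) ≤ Real.exp (-τ * c) :=
      Real.exp_le_exp.2 (by nlinarith [hc.2])
    nlinarith [mul_le_mul_of_nonneg_left hcx (le_of_lt (mul_pos hα hτ))]

/-- Let `α ∈ (0,1)`, `τ > 0` and let `λ₂ < 0` be the (unique) negative real zero of
`f p = 1 - α e^{-τp} - p`. Then every nonreal complex characteristic root `p` satisfies
`Re p < λ₂`; in particular, the characteristic equation has exactly one root with positive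
real part (the positive real root). -/
theorem suarez_schopf_nonreal_roots_left (α τ l₂ : ℝ) (hα : α ∈ Set.Ioo (0 : ℝ) 1)
    (hτ : 0 < τ) (hl₂ : l₂ < 0) (hzero : 1 - α * Real.exp (-τ * l₂) - l₂ = 0) :
    (∀ p : ℂ, SScharC α τ p = 0 → p.im ≠ 0 → p.re < l₂) ∧
    (∃! p : ℂ, SScharC α τ p = 0 ∧ 0 < p.re) := by
  obtain ⟨hα0, hα1⟩ := hα
  -- Part 1: nonreal roots have real part `< l₂`.
  have part1 : ∀ p : ℂ, SScharC α τ p = 0 → p.im ≠ 0 → p.re < l₂ := by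
    intro p hp hy
    have hre := congrArg Complex.re hp
    have him := congrArg Complex.im hp
    simp only [SScharC] at hre him
    simp [Complex.exp_re, Complex.exp_im] at hre him
    set x := p.re with hx
    set y := p.im with hyd
    have hE : (0:ℝ) < Real.exp (-(τ * x)) := Real.exp_pos _
    -- from the imaginary part: `1 < α τ e^{-τ x}`
    have hty : τ * y ≠ 0 := mul_ne_zero (ne_of_gt hτ) hy
    have hsin := abs_sin_lt hty
    have hyeq : y = α * (Real.exp (-(τ * x)) * Real.sin (τ * y)) := by linarith
    have hyabs : |y| = α * Real.exp (-(τ * x)) * |Real.sin (τ * y)| := by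
      conv_lhs => rw [hyeq]
      rw [abs_mul, abs_mul, abs_of_pos hα0, abs_of_pos hE, mul_assoc]
    have hd : 1 < α * τ * Real.exp (-(τ * x)) := by
      have hsin' : |Real.sin (τ * y)| < τ * |y| := by
        rwa [abs_mul, abs_of_pos hτ] at hsin
      have h1 : |y| < α * Real.exp (-(τ * x)) * (τ * |y|) := by
        have := mul_lt_mul_of_pos_left hsin' (mul_pos hα0 hE)
        linarith [hyabs]
      have hy0 : 0 < |y| := abs_pos.2 hy
      nlinarith
    -- from the real part: `f x < 0`
    have hcos : Real.cos (τ * y) < 1 := by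
      rcases lt_or_eq_of_le (Real.cos_le_one (τ * y)) with h | h
      · exact h
      · exfalso
        have hs0 : Real.sin (τ * y) = 0 := by
          nlinarith [Real.sin_sq_add_cos_sq (τ * y)]
        rw [hs0] at him
        simp at him
        exact hy (by linarith)
      
    have hfx : 1 - α * Real.exp (-τ * x) - x < 0 := by
      have hxeq : x = 1 - α * (Real.exp (-(τ * x)) * Real.cos (τ * y)) := by linarith
      have : α * (Real.exp (-(τ * x)) * Real.cos (τ * y)) < α * Real.exp (-(τ * x)) :=
        by nlinarith
      rw [show -τ * x = -(τ * x) by ring]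
      linarith
    exact lt_of_neg_of_deriv_pos hα0 hτ hzero hfx
      (by rw [show -τ * x = -(τ * x) by ring]; exact hd)
  refine ⟨part1, ?_⟩
  -- Part 2: existence and uniqueness of a root with positive real part.
  -- Any root with positive real part is real, and positive real roots are unique.
  have huniq : ∀ a b : ℝ, 0 < a → 0 < b →
      1 - α * Real.exp (-τ * a) - a = 0 → 1 - α * Real.exp (-τ * b) - b = 0 → a = b := by
    have key : ∀ a b : ℝ, 0 < a → a < b →
        1 - α * Real.exp (-τ * a) - a = 0 → 1 - α * Real.exp (-τ * b) - b = 0 → False := by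
      intro a b ha hab hfa hfb
      obtain ⟨c₁, hc₁, he₁⟩ := ss_mvt α τ 0 a ha
      obtain ⟨c₂, hc₂, he₂⟩ := ss_mvt α τ a b hab
      rw [hfa] at he₁ he₂
      rw [hfb] at he₂
      simp at he₁ he₂
      -- he₁ : α τ e^{-τ c₁} - 1 = (0 - (1 - α))/a < 0 ; he₂ : α τ e^{-τ c₂} - 1 = 0
      have h1 : α * τ * Real.exp (-(τ * c₁)) < 1 := by
        have := div_neg_of_neg_of_pos (by linarith : α - 1 < 0) ha
        linarith
      have h2 : α * τ * Real.exp (-(τ * c₂)) = 1 := by linarith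
      have hc : c₁ < c₂ := lt_trans hc₁.2 hc₂.1
      have : Real.exp (-(τ * c₂)) < Real.exp (-(τ * c₁)) := Real.exp_lt_exp.2 (by nlinarith)
      nlinarith [mul_pos hα0 hτ]
    intro a b ha hb hfa hfb
    rcases lt_trichotomy a b with h | h | h
    · exact absurd (key a b ha h hfa hfb) (not_false)
    · exact h
    · exact absurd (key b a hb h hfb hfa) (not_false)
  -- existence of a positive real root, by IVT on `[0, 2]`
  obtain ⟨a, ha2, hfa⟩ : ∃ a ∈ Set.Icc (0:ℝ) 2, 1 - α * Real.exp (-τ * a) - a = 0 := by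
    have hcont : ContinuousOn (fun t : ℝ => 1 - α * Real.exp (-τ * t) - t) (Set.Icc 0 2) :=
      (by fun_prop : Continuous fun t : ℝ => 1 - α * Real.exp (-τ * t) - t).continuousOn
    have h0 : (0:ℝ) ∈ Set.Icc (1 - α * Real.exp (-τ * 2) - 2) (1 - α * Real.exp (-τ * 0) - 0) := by
      constructor
      · have := Real.exp_pos (-τ * 2); nlinarith
      · simp; nlinarith [Real.exp_zero]
    obtain ⟨a, ha, hfa⟩ := intermediate_value_Icc' (by norm_num : (0:ℝ) ≤ 2) hcont h0
    exact ⟨a, ha, hfa⟩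
  have ha0 : 0 < a := by
    rcases eq_or_lt_of_le ha2.1 with rfl | h
    · exfalso; rw [show -τ * 0 = (0:ℝ) by ring, Real.exp_zero] at hfa; linarith
    · exact h
  refine ⟨(a : ℂ), ⟨by rw [SScharC_real, hfa]; simp, by simpa using ha0⟩, ?_⟩
  rintro q ⟨hq, hqre⟩
  -- q must be real
  have hqim : q.im = 0 := by
    by_contra h
    have := part1 q hq h
    linarith
  have hqeq : q = ((q.re : ℝ) : ℂ) := Complex.ext rfl (by simp [hqim])
  rw [hqeq] at hq
  rw [SScharC_real] at hq
  have hfq : 1 - α * Real.exp (-τ * q.re) - q.re = 0 := by exact_mod_cast hq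
  rw [hqeq]
  exact_mod_cast congrArg (Complex.ofReal) (huniq q.re a hqre ha0 hfq hfa)
end

section
/- If α ∈ (0, 1/2] and τ > 0, then the characteristic equation 3α − 2 − α e^{−τp} − p = 0 has no purely imaginary roots: there is no ζ ∈ ℝ such that p = iζ satisfies the equation. -/
/-- The complex characteristic function of the Suarez–Schopf model at the symmetric
equilibria `±√(1-α)`: `p ↦ 3α - 2 - α * exp (-τ * p) - p`, `p ∈ ℂ`. -/
noncomputable def SScharSymC (α τ : ℝ) (p : ℂ) : ℂ :=
  3 * (α : ℂ) - 2 - (α : ℂ) * Complex.exp (-(τ : ℂ) * p) - p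

/-- If `α ∈ (0, 1/2]` and `τ > 0`, then the characteristic equation
`3α - 2 - α e^{-τp} - p = 0` has no purely imaginary roots `p = iζ`, `ζ ∈ ℝ`. -/
theorem suarez_schopf_no_imaginary_roots (α τ : ℝ) (hα : α ∈ Set.Ioc (0 : ℝ) (1 / 2))
    (hτ : 0 < τ) :
    ¬ ∃ ζ : ℝ, SScharSymC α τ (Complex.I * (ζ : ℂ)) = 0 := by
  obtain ⟨hα0, hα2⟩ := hα
  rintro ⟨ζ, h⟩
  rw [SScharSymC, Complex.ext_iff] at h
  simp [Complex.exp_re, Complex.exp_im, Real.cos_neg, Real.sin_neg, mul_comm] at h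
  obtain ⟨h1, h2⟩ := h
  have hc := Real.neg_one_le_cos (τ * ζ)
  have hcos : Real.cos (τ * ζ) = -1 := by nlinarith
  have hsin : Real.sin (τ * ζ) = 0 := by
    nlinarith [Real.sin_sq_add_cos_sq (τ * ζ)]
  have hζ : ζ = 0 := by nlinarith
  rw [hζ, mul_zero, Real.cos_zero] at hcos
  norm_num at hcos
end

section
/- Let α ∈ (1/2, 1), τ > 0 and ζ > 0. Then p = iζ is a root of the characteristic equation 3α − 2 − α e^{−τp} − p = 0 if and only if ζ = √(α² − (3α − 2)²) and there exists a nonnegative integer k such that τ = (arccos((3α − 2)/α) + 2πk) / √(α² − (3α − 2)²). -/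
/-- Let `α ∈ (1/2, 1)`, `τ > 0` and `ζ > 0`. Then `p = iζ` is a root of
`3α - 2 - α e^{-τp} - p = 0` if and only if `ζ = √(α² - (3α-2)²)` and
`τ = (arccos((3α-2)/α) + 2πk) / √(α² - (3α-2)²)` for some nonnegative integer `k`. -/
theorem suarez_schopf_imaginary_roots_param (α τ ζ : ℝ)
    (hα : α ∈ Set.Ioo (1 / 2 : ℝ) 1) (hτ : 0 < τ) (hζ : 0 < ζ) :
    SScharSymC α τ (Complex.I * (ζ : ℂ)) = 0 ↔
      ζ = Real.sqrt (α ^ 2 - (3 * α - 2) ^ 2) ∧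
      ∃ k : ℕ, τ = (Real.arccos ((3 * α - 2) / α) + 2 * Real.pi * k) /
        Real.sqrt (α ^ 2 - (3 * α - 2) ^ 2) := by
  obtain ⟨hα1, hα2⟩ := hα
  have hαpos : (0:ℝ) < α := by linarith
  have hc1 : 3 * α - 2 < α := by linarith
  have hc2 : -α < 3 * α - 2 := by linarith
  have hspos : 0 < α ^ 2 - (3 * α - 2) ^ 2 := by nlinarith
  have hsqpos : 0 < Real.sqrt (α ^ 2 - (3 * α - 2) ^ 2) := Real.sqrt_pos.2 hspos
  have hd1 : (3 * α - 2) / α ≤ 1 := le_of_lt ((div_lt_one hαpos).2 hc1)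
  have hd2 : -1 ≤ (3 * α - 2) / α := by rw [le_div_iff₀ hαpos]; linarith
  have hdsq : ((3 * α - 2) / α) ^ 2 < 1 := by
    rw [div_pow, div_lt_one (by positivity)]; nlinarith
  have hsinarccos : Real.sin (Real.arccos ((3 * α - 2) / α)) = Real.sqrt (1 - ((3 * α - 2) / α) ^ 2) :=
    Real.sin_arccos _
  have hαsin : α * Real.sqrt (1 - ((3 * α - 2) / α) ^ 2) = Real.sqrt (α ^ 2 - (3 * α - 2) ^ 2) := by
    rw [show α * Real.sqrt (1 - ((3 * α - 2) / α) ^ 2)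
        = Real.sqrt (α ^ 2) * Real.sqrt (1 - ((3 * α - 2) / α) ^ 2) by
          rw [Real.sqrt_sq hαpos.le],
      ← Real.sqrt_mul (sq_nonneg α)]
    congr 1
    field_simp
  have key : SScharSymC α τ (Complex.I * (ζ : ℂ)) = 0 ↔
      (α * Real.cos (τ * ζ) = 3 * α - 2 ∧ α * Real.sin (τ * ζ) = ζ) := by
    unfold SScharSymC
    rw [show -(τ:ℂ) * (Complex.I * (ζ:ℂ)) = ((-(τ*ζ):ℝ):ℂ) * Complex.I by push_cast; ring,
      Complex.ext_iff]
    simp only [Complex.sub_re, Complex.sub_im, Complex.mul_re, Complex.mul_im,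
      Complex.ofReal_re, Complex.ofReal_im, Complex.exp_ofReal_mul_I_re,
      Complex.exp_ofReal_mul_I_im, Complex.I_re, Complex.I_im, Complex.zero_re, Complex.zero_im,
      Real.cos_neg, Real.sin_neg]
    norm_num
    constructor
    · rintro ⟨h1, h2⟩; constructor <;> linarith
    · rintro ⟨h1, h2⟩; constructor <;> linarith
  rw [key]
  have hpi := Real.pi_pos
  have harcnn := Real.arccos_nonneg ((3 * α - 2) / α)
  have harcle := Real.arccos_le_pi ((3 * α - 2) / α)
  constructor
  · rintro ⟨h1, h2⟩
    have hζeq : ζ = Real.sqrt (α ^ 2 - (3 * α - 2) ^ 2) := by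
      have : ζ ^ 2 = α ^ 2 - (3 * α - 2) ^ 2 := by
        have hpy := Real.sin_sq_add_cos_sq (τ * ζ)
        nlinarith
      rw [← this, Real.sqrt_sq hζ.le]
    refine ⟨hζeq, ?_⟩
    have hcos : Real.cos (τ * ζ) = Real.cos (Real.arccos ((3 * α - 2) / α)) := by
      rw [Real.cos_arccos hd2 hd1]
      field_simp
      linarith
    have hθpos : 0 < τ * ζ := mul_pos hτ hζ
    have hsinpos : 0 < Real.sin (τ * ζ) := by
      by_contra h
      push_neg at h
      nlinarith
    obtain ⟨k, hk | hk⟩ := Real.cos_eq_cos_iff.1 hcos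
    · -- arccos = 2kπ + τζ, good branch with m = -k
      have hm : τ * ζ = Real.arccos ((3 * α - 2) / α) + 2 * Real.pi * ((-k : ℤ) : ℝ) := by
        push_cast
        linarith
      have hm0 : (0 : ℤ) ≤ -k := by
        by_contra h
        push_neg at h
        have h1k : (1 : ℤ) ≤ k := by omega
        have : (1 : ℝ) ≤ (k : ℝ) := by exact_mod_cast h1k
        nlinarith
      refine ⟨(-k).toNat, ?_⟩
      have hcast : (((-k).toNat : ℕ) : ℝ) = ((-k : ℤ) : ℝ) := by
        exact_mod_cast Int.toNat_of_nonneg hm0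
      rw [hcast, eq_div_iff hsqpos.ne', ← hζeq, ← hm]
    · -- arccos = 2kπ - τζ : contradiction via sin sign
      exfalso
      have : Real.sin (τ * ζ) = -Real.sqrt (1 - ((3 * α - 2) / α) ^ 2) := by
        rw [show τ * ζ = -Real.arccos ((3 * α - 2) / α) + (k : ℤ) * (2 * Real.pi) by
          push_cast; linarith, Real.sin_add_int_mul_two_pi, Real.sin_neg, hsinarccos]
      linarith [Real.sqrt_nonneg (1 - ((3 * α - 2) / α) ^ 2), hsinpos, this]
  · rintro ⟨hζeq, k, hτeq⟩
    have hθ : τ * ζ = Real.arccos ((3 * α - 2) / α) + 2 * Real.pi * k := by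
      rw [hτeq, hζeq, div_mul_cancel₀]
      exact hsqpos.ne'
    have hcos : Real.cos (τ * ζ) = (3 * α - 2) / α := by
      rw [hθ, show Real.arccos ((3 * α - 2) / α) + 2 * Real.pi * k
          = Real.arccos ((3 * α - 2) / α) + ((k : ℤ) : ℝ) * (2 * Real.pi) by push_cast; ring,
        Real.cos_add_int_mul_two_pi, Real.cos_arccos hd2 hd1]
    have hsin : Real.sin (τ * ζ) = Real.sqrt (1 - ((3 * α - 2) / α) ^ 2) := by
      rw [hθ, show Real.arccos ((3 * α - 2) / α) + 2 * Real.pi * k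
          = Real.arccos ((3 * α - 2) / α) + ((k : ℤ) : ℝ) * (2 * Real.pi) by push_cast; ring,
        Real.sin_add_int_mul_two_pi, hsinarccos]
    constructor
    · rw [hcos]; field_simp
    · rw [hsin, hαsin, hζeq]
end

section
/- Let α ∈ (1/2, 1). The set of delays τ > 0 for which the characteristic equation 3α − 2 − α e^{−τp} − p = 0 has a purely imaginary root p = iζ with ζ ∈ ℝ, ζ ≠ 0, has a smallest element, equal to arccos((3α − 2)/α) / √(α² − (3α − 2)²) (the neutral curve value). -/
/-- The characteristic equation at a purely imaginary point `p = iζ` is equivalent to the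
real system `α cos(τζ) = 3α - 2` and `α sin(τζ) = ζ`. -/
lemma char_iff (α τ ζ : ℝ) :
    SScharSymC α τ (Complex.I * (ζ : ℂ)) = 0 ↔
      α * Real.cos (τ * ζ) = 3 * α - 2 ∧ α * Real.sin (τ * ζ) = ζ := by
  have h : -(τ : ℂ) * (Complex.I * (ζ : ℂ)) = ((-(τ * ζ) : ℝ) : ℂ) * Complex.I := by
    push_cast; ring
  rw [SScharSymC, h, Complex.exp_mul_I, ← Complex.ofReal_cos, ← Complex.ofReal_sin,
    Real.cos_neg, Real.sin_neg, Complex.ext_iff]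
  simp [← Complex.ofReal_mul, Complex.cos_ofReal_re, Complex.cos_ofReal_im,
    Complex.sin_ofReal_re, Complex.sin_ofReal_im]
  constructor <;> rintro ⟨h1, h2⟩ <;> constructor <;> linarith

/-- Let `α ∈ (1/2, 1)`. The set of delays `τ > 0` for which the characteristic equation
`3α - 2 - α e^{-τp} - p = 0` has a purely imaginary root `p = iζ`, `ζ ≠ 0`, has a smallest
element, equal to the neutral curve value `arccos((3α-2)/α) / √(α² - (3α-2)²)`. -/
theorem suarez_schopf_neutral_curve_least (α : ℝ) (hα : α ∈ Set.Ioo (1 / 2 : ℝ) 1) :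
    IsLeast {τ : ℝ | 0 < τ ∧ ∃ ζ : ℝ, ζ ≠ 0 ∧ SScharSymC α τ (Complex.I * (ζ : ℂ)) = 0}
      (Real.arccos ((3 * α - 2) / α) / Real.sqrt (α ^ 2 - (3 * α - 2) ^ 2)) := by
  obtain ⟨hα1, hα2⟩ := hα
  have hαpos : (0:ℝ) < α := by linarith
  set c : ℝ := (3 * α - 2) / α with hc
  set s : ℝ := Real.sqrt (α ^ 2 - (3 * α - 2) ^ 2) with hs
  have hd : (0:ℝ) < α ^ 2 - (3 * α - 2) ^ 2 := by nlinarith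
  have hspos : 0 < s := Real.sqrt_pos.mpr hd
  have hs2 : s ^ 2 = α ^ 2 - (3 * α - 2) ^ 2 := Real.sq_sqrt hd.le
  have hc1 : c < 1 := by rw [hc, div_lt_one hαpos]; linarith
  have hcm1 : -1 < c := by rw [hc, lt_div_iff₀ hαpos]; nlinarith
  have hA : Real.cos (Real.arccos c) = c := Real.cos_arccos hcm1.le hc1.le
  have hApos : 0 < Real.arccos c := Real.arccos_pos.mpr hc1
  constructor
  · -- membership: τ₀ = arccos c / s with ζ = s is a root
    refine ⟨div_pos hApos hspos, s, hspos.ne', ?_⟩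
    rw [char_iff]
    have hts : Real.arccos c / s * s = Real.arccos c := div_mul_cancel₀ _ hspos.ne'
    rw [hts, hA]
    constructor
    · rw [hc, mul_div_assoc', mul_div_cancel_left₀ _ hαpos.ne']
    · rw [Real.sin_arccos]
      have h1c : 1 - c ^ 2 = (s / α) ^ 2 := by
        rw [hc]; field_simp; nlinarith
      rw [h1c, Real.sqrt_sq (by positivity)]
      field_simp
  · -- lower bound
    rintro τ ⟨hτ, ζ, hζ, hchar⟩
    rw [char_iff] at hchar
    obtain ⟨h1, h2⟩ := hchar
    have hpyth : Real.sin (τ * ζ) ^ 2 + Real.cos (τ * ζ) ^ 2 = 1 := Real.sin_sq_add_cos_sq _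
    have e1 : (α * Real.cos (τ * ζ)) ^ 2 = (3 * α - 2) ^ 2 := by rw [h1]
    have e2 : (α * Real.sin (τ * ζ)) ^ 2 = ζ ^ 2 := by rw [h2]
    have hζ2 : ζ ^ 2 = s ^ 2 := by
      rw [hs2]; linear_combination α ^ 2 * hpyth - e1 - e2
    have habs : |ζ| = s := by
      rw [← Real.sqrt_sq (abs_nonneg ζ), sq_abs, hζ2, Real.sqrt_sq hspos.le]
    have hcos : Real.cos (τ * |ζ|) = c := by
      rcases abs_cases ζ with ⟨h, _⟩ | ⟨h, _⟩
      · rw [h, hc, eq_div_iff hαpos.ne']; linarith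
      · rw [h, mul_neg, Real.cos_neg, hc, eq_div_iff hαpos.ne']; linarith
    have hθpos : 0 < τ * |ζ| := mul_pos hτ (abs_pos.mpr hζ)
    have hθ : Real.arccos c ≤ τ * |ζ| := by
      by_contra hlt
      push_neg at hlt
      have h1' : τ * |ζ| ∈ Set.Icc 0 Real.pi :=
        ⟨hθpos.le, hlt.le.trans (Real.arccos_le_pi c)⟩
      have h2' : Real.arccos c ∈ Set.Icc 0 Real.pi :=
        ⟨Real.arccos_nonneg c, Real.arccos_le_pi c⟩
      have := Real.strictAntiOn_cos h1' h2' hlt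
      rw [hcos, hA] at this
      exact lt_irrefl _ this
    rw [habs] at hθ
    rw [div_le_iff₀ hspos]
    linarith
end

section
/- Let α ∈ (1/2, 1) and 0 < τ < arccos((3α − 2)/α) / √(α² − (3α − 2)²). Then every complex root p of the characteristic equation 3α − 2 − α e^{−τp} − p = 0 satisfies Re p < 0; that is, the symmetric equilibria ±√(1−α) are linearly stable for parameters below the neutral curve. -/
/-- Chord inequality from concavity of `sin` on `[0, π]`:
for `0 < u ≤ v ≤ π`, `u * sin v ≤ v * sin u`. -/
private lemma chord_aux {u v : ℝ} (hu : 0 < u) (huv : u ≤ v) (hv : v ≤ Real.pi) :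
    u * Real.sin v ≤ v * Real.sin u := by
  rcases eq_or_lt_of_le huv with rfl | h
  · exact le_of_eq (by ring)
  · have hv0 : 0 < v := hu.trans h
    have h1 : (0:ℝ) < 1 - u / v := by
      rw [sub_pos]; exact (div_lt_one hv0).2 h
    have h2 : 0 < u / v := div_pos hu hv0
    have key := strictConcaveOn_sin_Icc.2 (Set.mem_Icc.2 ⟨le_rfl, Real.pi_pos.le⟩)
      (Set.mem_Icc.2 ⟨hv0.le, hv⟩) hv0.ne h1 h2 (by ring)
    rw [smul_eq_mul, smul_eq_mul, smul_eq_mul, smul_eq_mul, mul_zero, zero_add,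
      Real.sin_zero, mul_zero, zero_add, div_mul_cancel₀ _ hv0.ne'] at key
    have h3 := mul_lt_mul_of_pos_left key hv0
    have h4 : v * (u / v * Real.sin v) = u * Real.sin v := by field_simp
    linarith [h4 ▸ h3]



set_option maxHeartbeats 2000000 in
/-- Let `α ∈ (1/2, 1)` and `0 < τ < arccos((3α-2)/α) / √(α² - (3α-2)²)` (below the neutral
curve). Then every complex root of `3α - 2 - α e^{-τp} - p = 0` satisfies `Re p < 0`, i.e.
the symmetric equilibria `±√(1-α)` are linearly stable. -/
theorem suarez_schopf_stability_below_neutral_curve (α τ : ℝ)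
    (hα : α ∈ Set.Ioo (1 / 2 : ℝ) 1) (hτ : 0 < τ)
    (hτ' : τ < Real.arccos ((3 * α - 2) / α) / Real.sqrt (α ^ 2 - (3 * α - 2) ^ 2)) :
    ∀ p : ℂ, SScharSymC α τ p = 0 → p.re < 0 := by
  obtain ⟨hα1, hα2⟩ := hα
  have hαpos : (0:ℝ) < α := by linarith
  intro p hp
  by_contra hre
  push_neg at hre
  -- abbreviations
  obtain ⟨a, ha⟩ : ∃ x : ℝ, x = 3 * α - 2 := ⟨_, rfl⟩
  obtain ⟨θ, hθd⟩ : ∃ x : ℝ, x = Real.arccos ((3 * α - 2) / α) := ⟨_, rfl⟩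
  obtain ⟨ω, hωd⟩ : ∃ x : ℝ, x = Real.sqrt (α ^ 2 - (3 * α - 2) ^ 2) := ⟨_, rfl⟩
  rw [← hθd, ← hωd] at hτ'
  have hdiv1 : (3 * α - 2) / α < 1 := (div_lt_one hαpos).2 (by linarith)
  have hdiv2 : -1 < (3 * α - 2) / α := (lt_div_iff₀ hαpos).2 (by linarith)
  have hθpos : 0 < θ := hθd ▸ Real.arccos_pos.2 hdiv1
  have hcosθ : Real.cos θ = (3 * α - 2) / α := by
    rw [hθd]; exact Real.cos_arccos hdiv2.le hdiv1.le
  have hθpi : θ < Real.pi := by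
    rcases eq_or_lt_of_le (hθd ▸ Real.arccos_le_pi ((3 * α - 2) / α)) with he | h
    · rw [he, Real.cos_pi] at hcosθ; linarith
    · exact h
  have hω2 : (0:ℝ) < α ^ 2 - (3 * α - 2) ^ 2 := by nlinarith
  have hωpos : 0 < ω := hωd ▸ Real.sqrt_pos.2 hω2
  have hω_sq : ω ^ 2 = α ^ 2 - (3 * α - 2) ^ 2 := hωd ▸ Real.sq_sqrt hω2.le
  have hsinθpos : 0 < Real.sin θ := Real.sin_pos_of_pos_of_lt_pi hθpos hθpi
  have hωα : ω = α * Real.sin θ := by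
    have hpyth := Real.sin_sq_add_cos_sq θ
    have h1 : (α * Real.sin θ) ^ 2 = ω ^ 2 := by
      rw [hω_sq]; rw [hcosθ] at hpyth; field_simp at hpyth ⊢; nlinarith [hpyth]
    nlinarith [mul_pos hαpos hsinθpos]
  have hτθ : τ * ω < θ := (lt_div_iff₀ hωpos).1 hτ'
  -- extract real and imaginary parts of the characteristic equation
  have h1 := congrArg Complex.re hp
  have h2 := congrArg Complex.im hp
  simp only [SScharSymC] at h1 h2
  simp [Complex.exp_re, Complex.exp_im, Complex.mul_re, Complex.mul_im] at h1 h2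
  -- set r and y
  obtain ⟨r, hrd⟩ : ∃ x : ℝ, x = α * Real.exp (-(τ * p.re)) := ⟨_, rfl⟩
  have hr0 : 0 < r := hrd ▸ mul_pos hαpos (Real.exp_pos _)
  have hrα : r ≤ α := by
    have h3 : Real.exp (-(τ * p.re)) ≤ 1 := Real.exp_le_one_iff.2 (by nlinarith)
    rw [hrd]; nlinarith
  have h1' : p.re = a - r * Real.cos (τ * p.im) := by
    rw [ha, hrd, mul_assoc]; linarith
  have h2' : p.im = r * Real.sin (τ * p.im) := by
    rw [hrd, mul_assoc]; linarith
  clear hp h1 h2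
  obtain ⟨y, hyd⟩ : ∃ x : ℝ, x = |p.im| := ⟨_, rfl⟩
  have hy0 : 0 ≤ y := hyd ▸ abs_nonneg _
  have hx : p.re = a - r * Real.cos (τ * y) := by
    have hcos : Real.cos (τ * y) = Real.cos (τ * p.im) := by
      rcases abs_choice p.im with h | h
      · rw [hyd, h]
      · rw [hyd, h, mul_neg, Real.cos_neg]
    rw [hcos]; exact h1'
  have hy : y = r * Real.sin (τ * y) := by
    rcases abs_choice p.im with h | h
    · rw [hyd, h]; exact h2'
    · rw [hyd, h, mul_neg, Real.sin_neg, mul_neg, ← h2']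
  -- key step: cos (τ y) > a / α
  have hstep : (3 * α - 2) / α < Real.cos (τ * y) := by
    rcases eq_or_lt_of_le hy0 with h0 | hypos
    · rw [← h0, mul_zero, Real.cos_zero]; exact hdiv1
    · -- show τ * y < θ, then compare cosines
      have httheta : τ * y < θ := by
        rcases le_or_gt a 0 with ha0 | ha0
        · -- case a ≤ 0 : y ≤ ω via Pythagoras
          have e1 : p.re - a = -(r * Real.cos (τ * y)) := by linarith
          have hpyth : (p.re - a) ^ 2 + y ^ 2 = r ^ 2 := by
            have hc := Real.sin_sq_add_cos_sq (τ * y)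
            nlinarith [e1, hy]
          have hy2 : y ^ 2 ≤ ω ^ 2 := by
            rw [hω_sq, ← ha]; nlinarith [hre]
          have hyω : y ≤ ω := by nlinarith
          calc τ * y ≤ τ * ω := by nlinarith
            _ < θ := hτθ
        · -- case a > 0 : θ < π/2; use chord inequality
          have hθhalf : θ < Real.pi / 2 := by
            rw [hθd]
            exact Real.arccos_lt_pi_div_two.2 (div_pos (by linarith) hαpos)
          have hchord1 := chord_aux hθpos hθhalf.le (by linarith [Real.pi_pos])
          rw [Real.sin_pi_div_two, mul_one] at hchord1
          have hταsinθ : τ * α * Real.sin θ < θ := by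
            rw [hωα] at hτθ; linarith [hτθ]
          have hsin_pos : 0 < Real.sin (τ * y) := by nlinarith [hy, hr0]
          have hφle : τ * y ≤ τ * α * Real.sin (τ * y) := by
            have hh := mul_nonneg (mul_nonneg hτ.le (sub_nonneg.2 hrα)) hsin_pos.le
            nlinarith [hy, hh]
          have hsle1 := Real.sin_le_one (τ * y)
          have hφlt : τ * y < Real.pi / 2 := by nlinarith
          by_contra hcon
          push_neg at hcon
          have hchord2 := chord_aux hθpos hcon (by linarith [Real.pi_pos])
          nlinarith [hchord2, hφle, hsin_pos, hταsinθ, hsinθpos]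
      have h5 := Real.cos_lt_cos_of_nonneg_of_le_pi (by positivity) hθpi.le httheta
      rw [hcosθ] at h5; exact h5
  -- final contradiction
  have hrc : r * ((3 * α - 2) / α) < r * Real.cos (τ * y) :=
    mul_lt_mul_of_pos_left hstep hr0
  have hra : r * ((3 * α - 2) / α) = a * Real.exp (-(τ * p.re)) := by
    rw [hrd, ha]; field_simp
  have hfin : p.re < a * (1 - Real.exp (-(τ * p.re))) := by
    rw [hra] at hrc; nlinarith [hx]
  have hexp1 : Real.exp (-(τ * p.re)) ≤ 1 := Real.exp_le_one_iff.2 (by nlinarith)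
  have hexp2 : 1 - τ * p.re ≤ Real.exp (-(τ * p.re)) := by
    linarith [Real.add_one_le_exp (-(τ * p.re))]
  rcases le_or_gt a 0 with ha0 | ha0
  · nlinarith
  · -- a > 0 : need a * τ < 1
    have hθhalf : θ < Real.pi / 2 := by
      rw [hθd]
      refine Real.arccos_lt_pi_div_two.2 (div_pos ?_ hαpos)
      rw [ha] at ha0; linarith
    have htan := Real.lt_tan hθpos hθhalf
    rw [Real.tan_eq_sin_div_cos] at htan
    have hcospos : 0 < Real.cos θ := by
      rw [hcosθ]; refine div_pos ?_ hαpos; rw [ha] at ha0; linarith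
    have htc : θ * Real.cos θ < Real.sin θ := by
      rw [lt_div_iff₀ hcospos] at htan; linarith
    have haτ : a * τ < 1 := by
      have hτα : τ * α * Real.sin θ < θ := by rw [hωα] at hτθ; linarith
      have hacos : a = α * Real.cos θ := by rw [hcosθ, ha]; field_simp
      nlinarith [hsinθpos, hcospos]
    nlinarith
end

section
/- Let α ∈ (0, 1/2] and τ > 0 be arbitrary. Then every complex root p of the characteristic equation 3α − 2 − α e^{−τp} − p = 0 satisfies Re p < 0; that is, for α ≤ 1/2 the symmetric equilibria ±√(1−α) are linearly stable for all delays. -/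
/-- Let `α ∈ (0, 1/2]` and `τ > 0` be arbitrary. Then every complex root of
`3α - 2 - α e^{-τp} - p = 0` satisfies `Re p < 0`, i.e. for `α ≤ 1/2` the symmetric
equilibria `±√(1-α)` are linearly stable for all delays. -/
theorem suarez_schopf_stability_small_alpha (α τ : ℝ)
    (hα : α ∈ Set.Ioc (0 : ℝ) (1 / 2)) (hτ : 0 < τ) :
    ∀ p : ℂ, SScharSymC α τ p = 0 → p.re < 0 := by
  obtain ⟨hα0, hα2⟩ := hα
  intro p hp
  by_contra hcon
  push_neg at hcon
  unfold SScharSymC at hp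
  have hp' : p = 3 * (α : ℂ) - 2 - (α : ℂ) * Complex.exp (-(τ : ℂ) * p) := by
    linear_combination -hp
  have hzre : (-(τ : ℂ) * p).re = -(τ * p.re) := by simp
  have hzim : (-(τ : ℂ) * p).im = -(τ * p.im) := by simp
  have hre : p.re = 3 * α - 2 -
      α * (Real.exp (-(τ * p.re)) * Real.cos (τ * p.im)) := by
    have := congrArg Complex.re hp'
    simp only [Complex.sub_re, Complex.mul_re, Complex.mul_im, Complex.exp_re,
      Complex.ofReal_re, Complex.ofReal_im, hzre, hzim] at this
    simp at this
    linarith [this]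
  have him : p.im = α * (Real.exp (-(τ * p.re)) * Real.sin (τ * p.im)) := by
    have := congrArg Complex.im hp'
    simp only [Complex.sub_im, Complex.mul_im, Complex.mul_re, Complex.exp_im,
      Complex.exp_re, Complex.ofReal_re, Complex.ofReal_im, hzre, hzim] at this
    simp at this
    linarith [this]
  have hexp1 : Real.exp (-(τ * p.re)) ≤ 1 :=
    Real.exp_le_one_iff.mpr (by nlinarith)
  have hexp0 : 0 < Real.exp (-(τ * p.re)) := Real.exp_pos _
  have hcos1 : Real.cos (τ * p.im) ≤ 1 := Real.cos_le_one _
  have hcos1' : -1 ≤ Real.cos (τ * p.im) := Real.neg_one_le_cos _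
  -- exp * cos ≥ -1
  have hprod : -1 ≤ Real.exp (-(τ * p.re)) * Real.cos (τ * p.im) := by
    nlinarith
  -- hence p.re ≤ 4α - 2 ≤ 0, so p.re = 0
  have hre0 : p.re = 0 := by nlinarith
  have hexpeq : Real.exp (-(τ * p.re)) = 1 := by rw [hre0]; simp
  rw [hexpeq, one_mul, hre0] at hre
  -- 0 = 3α - 2 - α cos; with cos ≥ -1 and α ≤ 1/2, forces α = 1/2, cos = -1
  have hα12 : α = 1 / 2 := by nlinarith
  have hcosval : Real.cos (τ * p.im) = -1 := by
    rw [hα12] at hre; linarith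
  have hsin : Real.sin (τ * p.im) = 0 := by
    have h := Real.sin_sq_add_cos_sq (τ * p.im)
    rw [hcosval] at h
    nlinarith [sq_nonneg (Real.sin (τ * p.im))]
  rw [hexpeq, hsin] at him
  simp at him
  -- so p = 0
  have hpz : p = 0 := Complex.ext hre0 him
  rw [hpz] at hp
  simp at hp
  have := congrArg Complex.re hp
  simp at this
  linarith
end

section
/- Let α ∈ (0,1) and τ > 0. There exists λ > 0 such that both λ and −λ are zeros of f(p) = 1 − α e^{−τp} − p if and only if τ = log((1 + √(1 − α²))/α) / √(1 − α²); and in that case necessarily λ = √(1 − α²). Equivalently, the positive and negative real characteristic roots λ₁, λ₂ satisfy λ₁ + λ₂ = 0 exactly on this curve. -/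
/-- If `b ≠ 0` is a root and `0 < c < 1`, then `SSchar` is positive at `c*b`. -/
lemma SSchar_pos_between (α τ : ℝ) (hα0 : 0 < α) (hα1 : α < 1) (hτ : 0 < τ)
    (b c : ℝ) (hb : b ≠ 0) (hgb : SSchar α τ b = 0) (hc0 : 0 < c) (hc1 : c < 1) :
    0 < SSchar α τ (c * b) := by
  have hroot : α * Real.exp (-τ * b) = 1 - b := by
    have := hgb; unfold SSchar at this; linarith
  have hne : (0 : ℝ) ≠ -τ * b := by
    intro h
    have : -τ * b ≠ 0 := mul_ne_zero (by linarith) hb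
    exact this h.symm
  have hconv := strictConvexOn_exp.2 (Set.mem_univ (0 : ℝ)) (Set.mem_univ (-τ * b))
    hne (show (0:ℝ) < 1 - c by linarith) hc0 (show (1 - c) + c = 1 by ring)
  simp only [smul_eq_mul, Real.exp_zero] at hconv
  have key : Real.exp (-τ * (c * b)) < (1 - c) + c * Real.exp (-τ * b) := by
    have : (1 - c) * 0 + c * (-τ * b) = -τ * (c * b) := by ring
    rw [this] at hconv
    linarith
  have h2 : α * Real.exp (-τ * (c * b)) < (1 - c) * α + c * (1 - b) := by
    have := mul_lt_mul_of_pos_left key hα0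
    nlinarith [hroot]
  unfold SSchar
  nlinarith

/-- Let `α ∈ (0,1)`, `τ > 0`. There exists `λ > 0` with both `λ` and `-λ` zeros of
`f p = 1 - α e^{-τp} - p` if and only if `τ = log((1 + √(1-α²))/α)/√(1-α²)`; in that case
necessarily `λ = √(1-α²)`. Equivalently, the positive and negative real characteristic
roots `λ₁, λ₂` satisfy `λ₁ + λ₂ = 0` exactly on this curve. -/
theorem suarez_schopf_symmetric_roots_curve (α τ : ℝ) (hα : α ∈ Set.Ioo (0 : ℝ) 1)
    (hτ : 0 < τ) :
    ((∃ l : ℝ, 0 < l ∧ SSchar α τ l = 0 ∧ SSchar α τ (-l) = 0) ↔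
      τ = Real.log ((1 + Real.sqrt (1 - α ^ 2)) / α) / Real.sqrt (1 - α ^ 2)) ∧
    (∀ l : ℝ, 0 < l → SSchar α τ l = 0 → SSchar α τ (-l) = 0 →
      l = Real.sqrt (1 - α ^ 2)) ∧
    (∀ l₁ l₂ : ℝ, 0 < l₁ → SSchar α τ l₁ = 0 → l₂ < 0 → SSchar α τ l₂ = 0 →
      (l₁ + l₂ = 0 ↔
        τ = Real.log ((1 + Real.sqrt (1 - α ^ 2)) / α) / Real.sqrt (1 - α ^ 2))) := by
  obtain ⟨hα0, hα1⟩ := hα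
  set s := Real.sqrt (1 - α ^ 2) with hs
  have h1α : (0 : ℝ) < 1 - α ^ 2 := by nlinarith
  have hs2 : s ^ 2 = 1 - α ^ 2 := Real.sq_sqrt h1α.le
  have hs0 : 0 < s := Real.sqrt_pos.mpr h1α
  -- forward: any symmetric pair of roots forces l = s and τ on the curve
  have fwd : ∀ l : ℝ, 0 < l → SSchar α τ l = 0 → SSchar α τ (-l) = 0 →
      l = s ∧ τ = Real.log ((1 + s) / α) / s := by
    intro l hl h1 h2
    have e1 : α * Real.exp (-τ * l) = 1 - l := by
      unfold SSchar at h1; linarith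
    have e2 : α * Real.exp (τ * l) = 1 + l := by
      unfold SSchar at h2
      have : -τ * -l = τ * l := by ring
      rw [this] at h2; linarith
    have hprod : α ^ 2 = 1 - l ^ 2 := by
      have : (α * Real.exp (-τ * l)) * (α * Real.exp (τ * l)) = (1 - l) * (1 + l) := by
        rw [e1, e2]
      rw [mul_mul_mul_comm, ← Real.exp_add] at this
      simp only [neg_mul, neg_add_cancel, Real.exp_zero, mul_one] at this
      nlinarith
    have hls : l = s := by
      rw [hs, show (1 : ℝ) - α ^ 2 = l ^ 2 by linarith, Real.sqrt_sq hl.le]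
    refine ⟨hls, ?_⟩
    have hexp : Real.exp (τ * l) = (1 + l) / α := by
      field_simp at e2 ⊢; linarith
    have hlog : τ * l = Real.log ((1 + l) / α) := by
      rw [← hexp, Real.log_exp]
    rw [← hls]
    field_simp [ne_of_gt hl] at hlog ⊢
    linarith
  -- backward: on the curve, s and -s are roots
  have bwd : τ = Real.log ((1 + s) / α) / s →
      SSchar α τ s = 0 ∧ SSchar α τ (-s) = 0 := by
    intro hτeq
    have hτs : τ * s = Real.log ((1 + s) / α) := by
      rw [hτeq]; field_simp
    have hpos : (0 : ℝ) < (1 + s) / α := by positivity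
    have hexp : Real.exp (τ * s) = (1 + s) / α := by
      rw [hτs, Real.exp_log hpos]
    constructor
    · unfold SSchar
      have hexp' : Real.exp (-τ * s) = α / (1 + s) := by
        rw [show -τ * s = -(τ * s) by ring, Real.exp_neg, hexp]
        rw [inv_div]
      rw [hexp']
      field_simp
      nlinarith
    · unfold SSchar
      rw [show -τ * -s = τ * s by ring, hexp]
      field_simp
      ring
  constructor
  · constructor
    · rintro ⟨l, hl, h1, h2⟩
      exact (fwd l hl h1 h2).2
    · intro hτeq
      obtain ⟨r1, r2⟩ := bwd hτeq
      exact ⟨s, hs0, r1, r2⟩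
  constructor
  · intro l hl h1 h2; exact (fwd l hl h1 h2).1
  · intro l₁ l₂ hl₁ h1 hl₂ h2
    constructor
    · intro hsum
      have : l₂ = -l₁ := by linarith
      exact (fwd l₁ hl₁ h1 (this ▸ h2)).2
    · intro hτeq
      obtain ⟨r1, r2⟩ := bwd hτeq
      -- uniqueness of the positive root: l₁ = s
      have uniq : ∀ a b : ℝ, SSchar α τ a = 0 → SSchar α τ b = 0 →
          a ≠ 0 → b ≠ 0 → 0 < a / b → a / b < 1 → False := by
        intro a b ha hb ha0 hb0 hq0 hq1
        have : a = (a / b) * b := by field_simp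
        have hpos := SSchar_pos_between α τ hα0 hα1 hτ b (a / b) hb0 hb hq0 hq1
        rw [← this] at hpos
        exact absurd ha (ne_of_gt hpos)
      have h1s : l₁ = s := by
        by_contra hne
        rcases lt_or_gt_of_ne hne with h | h
        · exact uniq l₁ s h1 r1 (ne_of_gt hl₁) (ne_of_gt hs0)
            (by positivity) ((div_lt_one hs0).mpr h)
        · exact uniq s l₁ r1 h1 (ne_of_gt hs0) (ne_of_gt hl₁)
            (by positivity) ((div_lt_one hl₁).mpr h)
      have h2s : l₂ = -s := by
        by_contra hne
        have hns : (-s : ℝ) < 0 := by linarith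
        rcases lt_or_gt_of_ne hne with h | h
        · -- l₂ < -s < 0 : (-s)/l₂ ∈ (0,1)
          exact uniq (-s) l₂ r2 h2 (ne_of_lt hns) (ne_of_lt hl₂)
            (div_pos_iff.mpr (Or.inr ⟨hns, hl₂⟩))
            (by rw [show -s / l₂ = s / (-l₂) by ring]; exact (div_lt_one (by linarith)).mpr (by linarith))
        · -- -s < l₂ < 0 : l₂/(-s) ∈ (0,1)
          exact uniq l₂ (-s) h2 r2 (ne_of_lt hl₂) (ne_of_lt hns)
            (div_pos_iff.mpr (Or.inr ⟨hl₂, hns⟩))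
            (by rw [show l₂ / (-s) = (-l₂) / s by ring]; exact (div_lt_one hs0).mpr (by linarith))
      rw [h1s, h2s]; ring
end

section
/- For every α ∈ (1/2, 1) the strict inequality log((1 + √(1 − α²))/α) / √(1 − α²) < arccos((3α − 2)/α) / √(α² − (3α − 2)²) holds. Consequently the region Ω_dst = {(τ,α) : λ₁ + λ₂ < 0 on the boundary curve τ = log((1+√(1−α²))/α)/√(1−α²)} lies below the neutral curve, i.e. Ω_dst is contained in the region of linear stability Ω_st. -/
/-- For every `α ∈ (1/2, 1)` one has
`log((1 + √(1-α²))/α)/√(1-α²) < arccos((3α-2)/α)/√(α² - (3α-2)²)`; consequently every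
delay `τ` below the boundary curve of `Ω_dst` is also below the neutral curve, i.e.
`Ω_dst` is contained in the region of linear stability `Ω_st`. -/
theorem suarez_schopf_dst_below_neutral (α : ℝ) (hα : α ∈ Set.Ioo (1 / 2 : ℝ) 1) :
    Real.log ((1 + Real.sqrt (1 - α ^ 2)) / α) / Real.sqrt (1 - α ^ 2) <
      Real.arccos ((3 * α - 2) / α) / Real.sqrt (α ^ 2 - (3 * α - 2) ^ 2) ∧
    ∀ τ : ℝ, τ < Real.log ((1 + Real.sqrt (1 - α ^ 2)) / α) / Real.sqrt (1 - α ^ 2) →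
      τ < Real.arccos ((3 * α - 2) / α) / Real.sqrt (α ^ 2 - (3 * α - 2) ^ 2) := by
  obtain ⟨hα1, hα2⟩ := hα
  have hαpos : 0 < α := by linarith
  have h1 : (0:ℝ) < 1 - α ^ 2 := by nlinarith
  set β := Real.sqrt (1 - α ^ 2) with hβdef
  have hβpos : 0 < β := Real.sqrt_pos.mpr h1
  have hβ2 : β ^ 2 = 1 - α ^ 2 := Real.sq_sqrt h1.le
  -- Left side < 1/α
  have hy : 1 < (1 + β) / α := by
    rw [lt_div_iff₀ hαpos]; linarith
  have hlogpos : 0 < Real.log ((1 + β) / α) := Real.log_pos hy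
  have hsinh : Real.sinh (Real.log ((1 + β) / α)) = β / α := by
    rw [Real.sinh_log (by linarith : (0:ℝ) < (1 + β) / α)]
    have h1β : (1 : ℝ) + β ≠ 0 := by positivity
    field_simp
    nlinarith [hβ2]
  have hlt : Real.log ((1 + β) / α) < β / α := by
    rw [← hsinh]; exact Real.self_lt_sinh_iff.mpr hlogpos
  have hL : Real.log ((1 + β) / α) / β < 1 / α := by
    rw [div_lt_div_iff₀ hβpos hαpos]
    calc Real.log ((1 + β) / α) * α < (β / α) * α := by
          exact mul_lt_mul_of_pos_right hlt hαpos
      _ = 1 * β := by field_simp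
  -- Right side > 1/α
  set c := (3 * α - 2) / α with hcdef
  have hc1 : c < 1 := by rw [hcdef, div_lt_one hαpos]; linarith
  have hD : (0:ℝ) < α ^ 2 - (3 * α - 2) ^ 2 := by nlinarith
  set D := α ^ 2 - (3 * α - 2) ^ 2 with hDdef
  have hsD : 0 < Real.sqrt D := Real.sqrt_pos.mpr hD
  have hsqrt : Real.sqrt (1 - c ^ 2) = Real.sqrt D / α := by
    have : 1 - c ^ 2 = D / α ^ 2 := by
      rw [hcdef, hDdef]; field_simp
    rw [this, Real.sqrt_div hD.le, Real.sqrt_sq hαpos.le]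
  have harc : Real.sqrt D / α < Real.arccos c := by
    rw [← hsqrt, ← Real.sin_arccos]
    exact Real.sin_lt (Real.arccos_pos.mpr hc1)
  have hR : 1 / α < Real.arccos c / Real.sqrt D := by
    rw [div_lt_div_iff₀ hαpos hsD]
    have := mul_lt_mul_of_pos_right harc hαpos
    calc 1 * Real.sqrt D = (Real.sqrt D / α) * α := by field_simp
      _ < Real.arccos c * α := this
  have main : Real.log ((1 + β) / α) / β < Real.arccos c / Real.sqrt D := hL.trans hR
  exact ⟨main, fun τ hτ => hτ.trans main⟩
end

section
/- Let α ∈ (0,1), τ > 0, γ = √(1 + α), R ≥ 0 and t₀ ∈ ℝ. Suppose x : [t₀ − τ, ∞) → ℝ is continuous, differentiable on [t₀, ∞), satisfies x'(t) = x(t) − α x(t − τ) − x(t)³ for all t ≥ t₀, and |x(s)| ≤ γ + R for all s ∈ [t₀ − τ, t₀]. Then |x(t)| ≤ γ + R for all t ≥ t₀ (positive invariance of the balls S_R = {φ : ‖φ‖_∞ ≤ γ + R}). -/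
open Set Filter Topology

/-- If `x` has one-sided derivative `d` at `c` within `Ici t₀`, `t₀ < c`, and all values
strictly to the left of `c` (in `[t₀, c)`) are below `x c`, then `d ≥ 0`. -/
lemma left_slope_nonneg {x : ℝ → ℝ} {d t₀ c : ℝ} (h : HasDerivWithinAt x d (Set.Ici t₀) c)
    (hc : t₀ < c) (hlt : ∀ s ∈ Set.Ico t₀ c, x s < x c) : 0 ≤ d := by
  have htend : Tendsto (slope x c) (𝓝[Set.Ici t₀ \ {c}] c) (𝓝 d) :=
    hasDerivWithinAt_iff_tendsto_slope.mp h
  have hsub : Set.Ico t₀ c ⊆ Set.Ici t₀ \ {c} := fun s hs => ⟨hs.1, ne_of_lt hs.2⟩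
  have htend' : Tendsto (slope x c) (𝓝[Set.Ico t₀ c] c) (𝓝 d) :=
    htend.mono_left (nhdsWithin_mono c hsub)
  have hne : (𝓝[Set.Ico t₀ c] c).NeBot := right_nhdsWithin_Ico_neBot hc
  refine ge_of_tendsto htend' ?_
  filter_upwards [self_mem_nhdsWithin] with s hs
  have h1 : x s - x c < 0 := sub_neg.mpr (hlt s hs)
  have h2 : s - c < 0 := sub_neg.mpr hs.2
  have hpos : 0 < (x s - x c) / (s - c) := div_pos_of_neg_of_neg h1 h2
  have : slope x c s = (x s - x c) / (s - c) := by
    simp [slope, div_eq_inv_mul]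
  rw [this]
  exact hpos.le

/-- Positive invariance of the balls `S_R = {φ : ‖φ‖_∞ ≤ γ + R}`, `γ = √(1+α)`, for the
Suarez–Schopf delayed oscillator `x'(t) = x(t) - α x(t-τ) - x(t)³`: if a solution defined
on `[t₀ - τ, ∞)` satisfies `|x(s)| ≤ γ + R` on the initial segment `[t₀ - τ, t₀]`, then
`|x(t)| ≤ γ + R` for all `t ≥ t₀`. -/
theorem suarez_schopf_invariant_balls (α τ γ R t₀ : ℝ) (x : ℝ → ℝ)
    (hα : α ∈ Set.Ioo (0 : ℝ) 1) (hτ : 0 < τ) (hγ : γ = Real.sqrt (1 + α)) (hR : 0 ≤ R)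
    (hcont : ContinuousOn x (Set.Ici (t₀ - τ)))
    (hderiv : ∀ t, t₀ ≤ t →
      HasDerivWithinAt x (x t - α * x (t - τ) - (x t) ^ 3) (Set.Ici t₀) t)
    (hinit : ∀ s ∈ Set.Icc (t₀ - τ) t₀, |x s| ≤ γ + R) :
    ∀ t, t₀ ≤ t → |x t| ≤ γ + R := by
  obtain ⟨hα0, hα1⟩ := hα
  have hγsq : γ ^ 2 = 1 + α := by
    rw [hγ, sq]; exact Real.mul_self_sqrt (by linarith)
  have hγ1 : 1 < γ := by
    nlinarith [Real.sqrt_nonneg (1 + α), hγ ▸ Real.sqrt_nonneg (1 + α)]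
  set M := γ + R with hM
  have hM1 : 1 < M := by linarith
  intro t ht
  refine le_of_forall_pos_le_add ?_
  intro ε hε
  by_contra hcon
  push_neg at hcon
  -- the set of times in `[t₀, t]` where the bound `M + ε` is reached
  set A : Set ℝ := Icc t₀ t ∩ (fun s => |x s|) ⁻¹' Ici (M + ε) with hA
  have hsub : Icc t₀ t ⊆ Ici (t₀ - τ) := fun s hs => le_trans (by linarith) hs.1
  have hclosed : IsClosed A :=
    ((hcont.mono hsub).abs).preimage_isClosed_of_isClosed isClosed_Icc isClosed_Ici
  have hne : A.Nonempty := ⟨t, ⟨ht, le_refl t⟩, hcon.le⟩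
  have hbdd : BddBelow A := ⟨t₀, fun s hs => hs.1.1⟩
  set c := sInf A with hc
  have hcA : c ∈ A := hclosed.csInf_mem hne hbdd
  obtain ⟨⟨hct₀, hct⟩, hcval⟩ := hcA
  have hcval : M + ε ≤ |x c| := hcval
  have hxt₀ : |x t₀| ≤ M := hinit t₀ ⟨by linarith, le_refl t₀⟩
  have hct₀' : t₀ < c := by
    rcases lt_or_eq_of_le hct₀ with h | h
    · exact h
    · exfalso; rw [← h] at hcval; linarith
  have hmin : ∀ s ∈ Ico t₀ c, |x s| < M + ε := by
    intro s hs
    by_contra hle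
    push_neg at hle
    have : s ∈ A := ⟨⟨hs.1, le_trans hs.2.le hct⟩, hle⟩
    exact absurd (csInf_le hbdd this) (not_le.mpr hs.2)
  -- bound on the delayed value
  have hdel : |x (c - τ)| ≤ M + ε := by
    rcases le_or_gt (c - τ) t₀ with h | h
    · exact le_trans (hinit _ ⟨by linarith, h⟩) (by linarith)
    · exact (hmin _ ⟨h.le, by linarith⟩).le
  have hd := hderiv c hct₀
  rcases le_or_gt 0 (x c) with hsign | hsign
  · -- x c ≥ M + ε : derivative is negative, contradiction with left slope
    have hxc : M + ε ≤ x c := by rwa [abs_of_nonneg hsign] at hcval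
    have hdneg : x c - α * x (c - τ) - (x c) ^ 3 < 0 := by
      have h1 : -(M + ε) ≤ x (c - τ) := neg_le_of_abs_le hdel
      have huγ : γ < x c := by linarith
      have hu2 : 1 + α < (x c) ^ 2 := by nlinarith
      have h2 : α * (-(x c)) ≤ α * x (c - τ) :=
        mul_le_mul_of_nonneg_left (by linarith) hα0.le
      have h3 : x c * (1 + α - (x c) ^ 2) < 0 :=
        mul_neg_of_pos_of_neg (by linarith) (by linarith)
      nlinarith
    have h0 : 0 ≤ x c - α * x (c - τ) - (x c) ^ 3 := by
      refine left_slope_nonneg hd hct₀' ?_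
      intro s hs
      have := hmin s hs
      have : x s ≤ |x s| := le_abs_self _
      linarith [hmin s hs, le_abs_self (x s)]
    linarith
  · -- x c ≤ -(M + ε) : derivative is positive
    have hxc : x c ≤ -(M + ε) := by
      rw [abs_of_neg hsign] at hcval; linarith
    have hdpos : 0 < x c - α * x (c - τ) - (x c) ^ 3 := by
      have h1 : x (c - τ) ≤ M + ε := le_of_abs_le hdel
      have huγ : x c < -γ := by linarith
      have hu2 : 1 + α < (x c) ^ 2 := by nlinarith
      have h2 : α * x (c - τ) ≤ α * (-(x c)) :=
        mul_le_mul_of_nonneg_left (by linarith) hα0.le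
      have h3 : 0 < x c * (1 + α - (x c) ^ 2) :=
        mul_pos_of_neg_of_neg (by linarith) (by linarith)
      nlinarith
    have h0 : 0 ≤ -(x c - α * x (c - τ) - (x c) ^ 3) := by
      refine left_slope_nonneg (x := fun s => -x s) hd.neg hct₀' ?_
      intro s hs
      have h1 := hmin s hs
      have h2 : -(x s) ≤ |x s| := neg_le_abs _
      show -x s < -x c
      linarith
    linarith
end

section
/- Let α ∈ (0,1), τ > 0, γ = √(1 + α) and t₀ ∈ ℝ. Suppose x : [t₀ − τ, ∞) → ℝ is continuous, differentiable on [t₀, ∞) and satisfies x'(t) = x(t) − α x(t − τ) − x(t)³ for all t ≥ t₀. Then limsup_{t→∞} |x(t)| ≤ γ; that is, every solution eventually enters any neighborhood of the dissipativity ball of radius γ = √(1+α). -/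
open Set Filter Topology

lemma ss_key_ineq (α K r a b : ℝ) (hα : 0 < α) (hr1 : 1 ≤ r)
    (hδ : 0 < r^3 - r - α*K) (hra : r ≤ |a|) (hbK : |b| ≤ K) :
    2 * a * (a - α * b - a^3) ≤ -(2*r*(r^3 - r - α*K)) := by
  set w := |a| with hw
  have hw0 : 0 ≤ w := abs_nonneg a
  have hab : -(w*K) ≤ a*b := by
    have h1 : |a*b| ≤ w*K := by
      rw [abs_mul]
      exact mul_le_mul_of_nonneg_left hbK hw0
    have := neg_abs_le (a*b)
    linarith
  have hsq : a^2 = w^2 := (sq_abs a).symm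
  have h4 : a^4 = w^4 := by
    have : a^4 = (a^2)^2 := by ring
    rw [this, hsq]; ring
  have h2 : w + α*K - w^3 ≤ r + α*K - r^3 := by
    have hwr : r ≤ w := hra
    have hpos : 0 ≤ w^2 + w*r + r^2 - 1 := by nlinarith
    nlinarith [mul_nonneg (sub_nonneg.mpr hwr) hpos]
  have h3 : r + α*K - r^3 < 0 := by linarith
  have h5 : w * (w + α*K - w^3) ≤ r * (r + α*K - r^3) := by
    calc w * (w + α*K - w^3) ≤ w * (r + α*K - r^3) :=
          mul_le_mul_of_nonneg_left h2 hw0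
      _ ≤ r * (r + α*K - r^3) := by nlinarith
  nlinarith [h5]

lemma ss_absorb (α τ t₀ T K r : ℝ) (x : ℝ → ℝ) (hα : 0 < α) (hτ : 0 < τ)
    (hcont : ContinuousOn x (Set.Ici (t₀ - τ)))
    (hderiv : ∀ t, t₀ ≤ t →
      HasDerivWithinAt x (x t - α * x (t - τ) - (x t) ^ 3) (Set.Ici t₀) t)
    (hT : t₀ ≤ T) (hr1 : 1 ≤ r) (hδ : 0 < r^3 - r - α*K)
    (hK : ∀ s, T - τ ≤ s → |x s| ≤ K) :
    ∃ T', T ≤ T' ∧ ∀ t, T' ≤ t → |x t| ≤ r := by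
  set v : ℝ → ℝ := fun s => x s ^ 2 with hv
  have hvdef : ∀ s, v s = x s ^ 2 := fun s => rfl
  set δ : ℝ := 2*r*(r^3 - r - α*K) with hδdef
  have hδ0 : 0 < δ := by positivity
  have hK0 : 0 ≤ K := le_trans (abs_nonneg _) (hK T (by linarith))
  have hsub : Set.Ici t₀ ⊆ Set.Ici (t₀ - τ) := Ici_subset_Ici.mpr (by linarith)
  have hvc : ContinuousOn v (Set.Ici t₀) := ((hcont.mono hsub).pow 2)
  have hvd : ∀ t, t₀ ≤ t → HasDerivWithinAt v
      (2 * x t * (x t - α * x (t - τ) - (x t) ^ 3)) (Set.Ici t₀) t := by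
    intro t ht
    have := (hderiv t ht).pow 2
    convert this using 1
    · rfl
    · rfl
    · rfl
    push_cast
    ring
  have hpt : ∀ t, T ≤ t → r ≤ |x t| →
      2 * x t * (x t - α * x (t - τ) - (x t) ^ 3) ≤ -δ := by
    intro t ht hrt
    exact ss_key_ineq α K r (x t) (x (t - τ)) hα hr1 hδ hrt (hK (t - τ) (by linarith))
  -- Step 1: the solution must enter the ball
  have step1 : ∃ t₁, T ≤ t₁ ∧ |x t₁| < r := by
    by_contra h
    push_neg at h
    set b : ℝ := T + (K^2 + 1)/δ with hb
    have hTb : T ≤ b := by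
      have : 0 ≤ (K^2+1)/δ := by positivity
      rw [hb]; linarith
    set g : ℝ → ℝ := fun s => v s + δ * s with hg
    have hdg : ∀ s, T < s → HasDerivAt g
        (2 * x s * (x s - α * x (s - τ) - (x s) ^ 3) + δ) s := by
      intro s hs
      have hst : t₀ < s := lt_of_le_of_lt hT hs
      have h1 : HasDerivAt v (2 * x s * (x s - α * x (s - τ) - (x s) ^ 3)) s :=
        (hvd s hst.le).hasDerivAt (Ici_mem_nhds hst)
      have h2 : HasDerivAt (fun y : ℝ => δ * y) δ s := by
        simpa using (hasDerivAt_id s).const_mul δ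
      exact h1.add h2
    have hanti : AntitoneOn g (Set.Icc T b) := by
      apply antitoneOn_of_deriv_nonpos (convex_Icc T b)
      · exact (hvc.mono (fun s hs => le_trans hT hs.1)).add
          (continuousOn_const.mul continuousOn_id)
      · intro s hs
        rw [interior_Icc] at hs
        exact (hdg s hs.1).differentiableAt.differentiableWithinAt
      · intro s hs
        rw [interior_Icc] at hs
        rw [(hdg s hs.1).deriv]
        have := hpt s hs.1.le (h s hs.1.le)
        linarith
    have hgb := hanti (Set.left_mem_Icc.mpr hTb) (Set.right_mem_Icc.mpr hTb) hTb
    have hvT : v T ≤ K^2 := by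
      have h1 := hK T (by linarith)
      rw [hvdef]
      nlinarith [abs_nonneg (x T), sq_abs (x T)]
    have hvb : 0 ≤ v b := sq_nonneg _
    have hcancel : δ * b - δ * T = K^2 + 1 := by
      rw [hb]; field_simp; ring
    have hgb' : v b + δ * b ≤ v T + δ * T := hgb
    nlinarith
  obtain ⟨t₁, ht₁T, ht₁⟩ := step1
  refine ⟨t₁, ht₁T, ?_⟩
  -- Step 2: invariance of the ball
  have step2 : ∀ t, t₁ ≤ t → v t ≤ r^2 := by
    intro t₂ ht₂
    by_contra h2
    push_neg at h2
    have hvt₁ : v t₁ < r^2 := by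
      rw [hvdef]
      nlinarith [abs_nonneg (x t₁), sq_abs (x t₁)]
    have ht₁t₂ : t₁ < t₂ := by
      rcases lt_or_eq_of_le ht₂ with h | h
      · exact h
      · exfalso; rw [← h] at h2; linarith
    set S : Set ℝ := Set.Icc t₁ t₂ ∩ v ⁻¹' (Set.Iic (r^2)) with hS
    have hScl : IsClosed S :=
      ContinuousOn.preimage_isClosed_of_isClosed
        (hvc.mono (fun s hs => le_trans (le_trans hT ht₁T) hs.1)) isClosed_Icc isClosed_Iic
    have hSne : S.Nonempty := ⟨t₁, ⟨le_refl _, ht₁t₂.le⟩, hvt₁.le⟩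
    have hSbdd : BddAbove S := ⟨t₂, fun s hs => hs.1.2⟩
    set s₀ : ℝ := sSup S with hs₀def
    have hs₀S : s₀ ∈ S := hScl.csSup_mem hSne hSbdd
    have hs₀le : v s₀ ≤ r^2 := hs₀S.2
    have hs₀t₂ : s₀ < t₂ := by
      rcases lt_or_eq_of_le hs₀S.1.2 with h | h
      · exact h
      · exfalso; have := hs₀S.2; rw [h] at this; simp only [Set.mem_preimage, Set.mem_Iic] at this; linarith
    have hs₀t₀ : t₀ ≤ s₀ := le_trans hT (le_trans ht₁T hs₀S.1.1)
    have hgt : ∀ s, s ∈ Set.Ioo s₀ t₂ → r^2 < v s := by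
      intro s hs
      by_contra hle
      push_neg at hle
      have hmem : s ∈ S := ⟨⟨le_trans hs₀S.1.1 hs.1.le, hs.2.le⟩, hle⟩
      exact absurd (le_csSup hSbdd hmem) (not_le.mpr hs.1)
    have hmemIoo : Set.Ioo s₀ t₂ ∈ 𝓝[>] s₀ := Ioo_mem_nhdsGT_of_mem ⟨le_refl _, hs₀t₂⟩
    have hright : (𝓝[>] s₀) ≤ 𝓝[Set.Ici t₀ \ {s₀}] s₀ :=
      nhdsWithin_mono _ (fun s hs => ⟨le_trans hs₀t₀ (le_of_lt hs), ne_of_gt hs⟩)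
    -- v s₀ = r^2
    have hvs₀ : r^2 ≤ v s₀ := by
      by_contra hlt
      push_neg at hlt
      have hcw : ContinuousWithinAt v (Set.Ici t₀) s₀ := hvc.continuousWithinAt hs₀t₀
      have hev : ∀ᶠ s in 𝓝[>] s₀, v s < r^2 := by
        have h1 : 𝓝[>] s₀ ≤ 𝓝[Set.Ici t₀] s₀ :=
          nhdsWithin_mono _ (fun s hs => le_trans hs₀t₀ (le_of_lt hs))
        exact (hcw.eventually_lt_const hlt).filter_mono h1
      obtain ⟨s, hs1, hs2⟩ := (hev.and (eventually_of_mem hmemIoo (fun y hy => hy))).exists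
      exact absurd (hgt s hs2) (not_lt.mpr hs1.le)
    -- derivative at s₀ is negative, but v increases to the right: contradiction
    have hrs₀ : r ≤ |x s₀| := by
      rw [hvdef] at hvs₀
      nlinarith [abs_nonneg (x s₀), sq_abs (x s₀)]
    have hD := hpt s₀ (le_trans ht₁T hs₀S.1.1) hrs₀
    have hslope := (hasDerivWithinAt_iff_tendsto_slope.mp (hvd s₀ hs₀t₀))
    have hDneg : 2 * x s₀ * (x s₀ - α * x (s₀ - τ) - (x s₀) ^ 3) < 0 := lt_of_le_of_lt hD (by linarith)
    have hevs : ∀ᶠ s in 𝓝[>] s₀, slope v s₀ s < 0 :=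
      (hslope.eventually_lt_const hDneg).filter_mono hright
    obtain ⟨s, hs1, hs2⟩ := (hevs.and (eventually_of_mem hmemIoo (fun y hy => hy))).exists
    rw [slope_def_field] at hs1
    have hspos : 0 < s - s₀ := sub_pos.mpr hs2.1
    have hvs : v s < v s₀ := by
      have hne' : s - s₀ ≠ 0 := by linarith
      have heq : v s - v s₀ = (v s - v s₀) / (s - s₀) * (s - s₀) :=
        (div_mul_cancel₀ _ hne').symm
      have h7 : v s - v s₀ < 0 := by
        rw [heq]; exact mul_neg_of_neg_of_pos hs1 hspos
      linarith
    exact absurd (hgt s hs2) (not_lt.mpr (by linarith))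
  intro t ht
  have h2 := step2 t ht
  rw [hvdef] at h2
  nlinarith [abs_nonneg (x t), sq_abs (x t)]

lemma ss_global (α τ t₀ : ℝ) (x : ℝ → ℝ) (hα : 0 < α) (hτ : 0 < τ)
    (hcont : ContinuousOn x (Set.Ici (t₀ - τ)))
    (hderiv : ∀ t, t₀ ≤ t →
      HasDerivWithinAt x (x t - α * x (t - τ) - (x t) ^ 3) (Set.Ici t₀) t) :
    ∃ K : ℝ, 1 ≤ K ∧ ∀ s, t₀ - τ ≤ s → |x s| ≤ K := by
  obtain ⟨M, hM⟩ := (isCompact_Icc (a := t₀ - τ) (b := t₀)).exists_bound_of_continuousOn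
      (hcont.mono (fun s hs => hs.1))
  simp only [Real.norm_eq_abs] at hM
  have hM0 : 0 ≤ M := le_trans (abs_nonneg _) (hM t₀ ⟨by linarith, le_refl _⟩)
  set γ₀ : ℝ := Real.sqrt (1 + α) with hγ₀
  have hγ₀0 : 0 ≤ γ₀ := Real.sqrt_nonneg _
  have hγ₀sq : γ₀^2 = 1 + α := Real.sq_sqrt (by linarith)
  set K : ℝ := max M γ₀ + 1 with hKdef
  have hKM : M < K := by have := le_max_left M γ₀; linarith [le_max_left M γ₀]
  have hKγ : γ₀ < K := by linarith [le_max_right M γ₀]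
  have hK1 : 1 ≤ K := by linarith [le_max_left M γ₀]
  have hKsq : 1 + α < K^2 := by nlinarith
  have hδK : 0 < K^3 - K - α*K := by nlinarith
  set v : ℝ → ℝ := fun s => x s ^ 2 with hv
  have hvdef : ∀ s, v s = x s ^ 2 := fun s => rfl
  have hsub : Set.Ici t₀ ⊆ Set.Ici (t₀ - τ) := Ici_subset_Ici.mpr (by linarith)
  have hvc : ContinuousOn v (Set.Ici t₀) := ((hcont.mono hsub).pow 2)
  have hvd : ∀ t, t₀ ≤ t → HasDerivWithinAt v
      (2 * x t * (x t - α * x (t - τ) - (x t) ^ 3)) (Set.Ici t₀) t := by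
    intro t ht
    have := (hderiv t ht).pow 2
    convert this using 1
    · rfl
    · rfl
    · rfl
    push_cast
    ring
  have claim : ∀ t, t₀ ≤ t → v t ≤ K^2 := by
    by_contra h
    push_neg at h
    obtain ⟨t₂, ht₂0, h2⟩ := h
    have hvt₀ : v t₀ < K^2 := by
      have h1 := hM t₀ ⟨by linarith, le_refl _⟩
      rw [hvdef]
      nlinarith [abs_nonneg (x t₀), sq_abs (x t₀)]
    have ht₀t₂ : t₀ < t₂ := by
      rcases lt_or_eq_of_le ht₂0 with h | h
      · exact h
      · exfalso; rw [h] at hvt₀; linarith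
    set S : Set ℝ := Set.Icc t₀ t₂ ∩ v ⁻¹' (Set.Ici (K^2)) with hS
    have hScl : IsClosed S :=
      ContinuousOn.preimage_isClosed_of_isClosed
        (hvc.mono (fun s hs => hs.1)) isClosed_Icc isClosed_Ici
    have hSne : S.Nonempty := ⟨t₂, ⟨ht₀t₂.le, le_refl _⟩, h2.le⟩
    have hSbdd : BddBelow S := ⟨t₀, fun s hs => hs.1.1⟩
    set t₁ : ℝ := sInf S with ht₁def
    have ht₁S : t₁ ∈ S := hScl.csInf_mem hSne hSbdd
    have hvt₁ : K^2 ≤ v t₁ := ht₁S.2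
    have ht₀t₁ : t₀ < t₁ := by
      rcases lt_or_eq_of_le ht₁S.1.1 with h | h
      · exact h
      · exfalso; rw [← h] at hvt₁; linarith
    have hlt : ∀ s, s ∈ Set.Ico t₀ t₁ → v s < K^2 := by
      intro s hs
      by_contra hle
      push_neg at hle
      have hmem : s ∈ S := ⟨⟨hs.1, le_trans hs.2.le ht₁S.1.2⟩, hle⟩
      exact absurd (csInf_le hSbdd hmem) (not_le.mpr hs.2)
    -- bound on |x (t₁ - τ)|
    have hxτ : |x (t₁ - τ)| ≤ K := by
      rcases le_or_gt (t₁ - τ) t₀ with hc | hc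
      · exact le_trans (hM _ ⟨by linarith, hc⟩) hKM.le
      · have := hlt (t₁ - τ) ⟨hc.le, by linarith⟩
        rw [hvdef] at this
        nlinarith [abs_nonneg (x (t₁ - τ)), sq_abs (x (t₁ - τ))]
    have hxt₁ : K ≤ |x t₁| := by
      rw [hvdef] at hvt₁
      nlinarith [abs_nonneg (x t₁), sq_abs (x t₁)]
    have hD := ss_key_ineq α K K (x t₁) (x (t₁ - τ)) hα hK1 hδK hxt₁ hxτ
    have hDneg : 2 * x t₁ * (x t₁ - α * x (t₁ - τ) - (x t₁) ^ 3) < 0 := by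
      have : 0 < 2*K*(K^3 - K - α*K) := by positivity
      linarith
    have hslope := hasDerivWithinAt_iff_tendsto_slope.mp (hvd t₁ ht₀t₁.le)
    have hmemIoo : Set.Ioo t₀ t₁ ∈ 𝓝[Set.Ioo t₀ t₁] t₁ := self_mem_nhdsWithin
    have hleft : (𝓝[Set.Ioo t₀ t₁] t₁) ≤ 𝓝[Set.Ici t₀ \ {t₁}] t₁ :=
      nhdsWithin_mono _ (fun s hs => ⟨hs.1.le, ne_of_lt hs.2⟩)
    have hne : (𝓝[Set.Ioo t₀ t₁] t₁).NeBot := by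
      rw [mem_closure_iff_nhdsWithin_neBot.symm, closure_Ioo (ne_of_lt ht₀t₁)]
      exact ⟨ht₀t₁.le, le_refl _⟩
    have hevs : ∀ᶠ s in 𝓝[Set.Ioo t₀ t₁] t₁, slope v t₁ s < 0 :=
      (hslope.eventually_lt_const hDneg).filter_mono hleft
    obtain ⟨s, hs1, hs2⟩ := (hevs.and (eventually_of_mem hmemIoo (fun y hy => hy))).exists
    rw [slope_def_field] at hs1
    have hsneg : s - t₁ < 0 := sub_neg.mpr hs2.2
    have hvs : v t₁ < v s := by
      have hne' : s - t₁ ≠ 0 := by linarith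
      have heq : v s - v t₁ = (v s - v t₁) / (s - t₁) * (s - t₁) :=
        (div_mul_cancel₀ _ hne').symm
      have h7 : 0 < v s - v t₁ := by
        rw [heq]; exact mul_pos_of_neg_of_neg hs1 hsneg
      linarith
    have := hlt s ⟨hs2.1.le, hs2.2⟩
    linarith
  refine ⟨K, hK1, fun s hs => ?_⟩
  rcases le_or_gt s t₀ with hc | hc
  · exact le_trans (hM s ⟨hs, hc⟩) hKM.le
  · have := claim s hc.le
    rw [hvdef] at this
    nlinarith [abs_nonneg (x s), sq_abs (x s)]


/-- Ultimate dissipativity of the Suarez–Schopf delayed oscillator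
`x'(t) = x(t) - α x(t-τ) - x(t)³`: every solution defined on `[t₀ - τ, ∞)` satisfies
`limsup_{t→∞} |x(t)| ≤ γ` with `γ = √(1+α)`; that is, the solution eventually enters
any neighborhood of the dissipativity ball of radius `γ`. -/
theorem suarez_schopf_ultimate_bound (α τ γ t₀ : ℝ) (x : ℝ → ℝ)
    (hα : α ∈ Set.Ioo (0 : ℝ) 1) (hτ : 0 < τ) (hγ : γ = Real.sqrt (1 + α))
    (hcont : ContinuousOn x (Set.Ici (t₀ - τ)))
    (hderiv : ∀ t, t₀ ≤ t →
      HasDerivWithinAt x (x t - α * x (t - τ) - (x t) ^ 3) (Set.Ici t₀) t) :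
    Filter.limsup (fun t => |x t|) Filter.atTop ≤ γ ∧
    ∀ ε > (0 : ℝ), ∃ T : ℝ, ∀ t, T ≤ t → |x t| ≤ γ + ε := by
  obtain ⟨hα0, hα1⟩ := hα
  have hγsq : γ^2 = 1 + α := by rw [hγ]; exact Real.sq_sqrt (by linarith)
  have hγ0 : 0 ≤ γ := by rw [hγ]; exact Real.sqrt_nonneg _
  have hγ1 : 1 ≤ γ := by nlinarith
  obtain ⟨K, hK1, hKg⟩ := ss_global α τ t₀ x hα0 hτ hcont hderiv
  have bdd : Filter.IsBoundedUnder (· ≤ ·) Filter.atTop (fun t => |x t|) :=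
    ⟨K, Filter.eventually_map.mpr (Filter.eventually_atTop.mpr
      ⟨t₀ - τ, fun t ht => hKg t ht⟩)⟩
  have cobdd : Filter.IsCoboundedUnder (· ≤ ·) Filter.atTop (fun t => |x t|) :=
    Filter.isCoboundedUnder_le_of_le Filter.atTop (fun t => abs_nonneg (x t))
  set L : ℝ := Filter.limsup (fun t => |x t|) Filter.atTop with hLdef
  have hmain : L ≤ γ := by
    by_contra hL
    push_neg at hL
    have hL1 : 1 < L := lt_of_le_of_lt hγ1 hL
    set η : ℝ := L^3 - L - α*L with hηdef
    have hη : 0 < η := by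
      rw [hηdef]
      nlinarith [mul_pos (show (0:ℝ) < L by linarith)
        (show 0 < L^2 - (1+α) by nlinarith)]
    set ε : ℝ := η/(2*α) with hεdef
    have hε0 : 0 < ε := by positivity
    have hαε : α * ε = η/2 := by rw [hεdef]; field_simp
    set ζ : ℝ := min (η/(12*L^2)) ((L-γ)/2) with hζdef
    have hζ0 : 0 < ζ := lt_min (by positivity) (by linarith)
    have hζ2 : ζ ≤ (L-γ)/2 := min_le_right _ _
    have hζ1 : ζ * (12 * L^2) ≤ η := by
      have h := min_le_left (η/(12*L^2)) ((L-γ)/2)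
      rw [le_div_iff₀ (by positivity)] at h
      exact h
    set r : ℝ := L - ζ with hrdef
    have hrγ : γ < r := by rw [hrdef]; linarith
    have hr1 : 1 ≤ r := by linarith
    have hrL : r < L := by rw [hrdef]; linarith
    have hζL : ζ ≤ L := by linarith
    have hδr : 0 < r^3 - r - α*(L+ε) := by
      have hζsq : ζ^2 ≤ L^2 := by nlinarith
      have h5 : ζ^3 ≤ ζ * L^2 := by nlinarith [mul_le_mul_of_nonneg_left hζsq hζ0.le]
      have h3 : 0 ≤ 3*L*ζ^2 := by positivity
      rw [hrdef]
      nlinarith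
    have hev : ∀ᶠ t in Filter.atTop, |x t| < L + ε :=
      Filter.eventually_lt_of_limsup_lt (by rw [← hLdef]; linarith) bdd
    obtain ⟨T₁, hT₁⟩ := Filter.eventually_atTop.mp hev
    set T : ℝ := max t₀ (T₁ + τ) with hTdef
    have hT0 : t₀ ≤ T := le_max_left _ _
    have hKT : ∀ s, T - τ ≤ s → |x s| ≤ L + ε := by
      intro s hs
      have : T₁ + τ ≤ T := le_max_right _ _
      exact (hT₁ s (by linarith)).le
    obtain ⟨T', hT'T, hT'⟩ := ss_absorb α τ t₀ T (L+ε) r x hα0 hτ hcont hderiv hT0 hr1 hδr hKT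
    have : L ≤ r :=
      Filter.limsup_le_of_le cobdd (Filter.eventually_atTop.mpr ⟨T', hT'⟩)
    linarith
  refine ⟨hmain, fun ε hε => ?_⟩
  have hev : ∀ᶠ t in Filter.atTop, |x t| < γ + ε :=
    Filter.eventually_lt_of_limsup_lt (by rw [← hLdef]; linarith) bdd
  obtain ⟨T, hT⟩ := Filter.eventually_atTop.mp hev
  exact ⟨T, fun t ht => (hT t ht).le⟩
end

section
/- Let α ∈ (0,1), τ > 0, A ≥ 0, and let W : ℝ → ℝ be continuous with |W(t)| ≤ A for all t. Let ρ > 0 satisfy ρ³ ≥ (1 + α)ρ + A, and let t₀ ∈ ℝ. Suppose x : [t₀ − τ, ∞) → ℝ is continuous, differentiable on [t₀, ∞), satisfies x'(t) = x(t) − α x(t − τ) − x(t)³ + W(t) for all t ≥ t₀, and |x(s)| ≤ ρ for all s ∈ [t₀ − τ, t₀]. Then |x(t)| ≤ ρ for all t ≥ t₀ (dissipativity of the periodically forced Suarez–Schopf model). -/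
/-- Dissipativity of the forced Suarez–Schopf model
`x'(t) = x(t) - α x(t-τ) - x(t)³ + W(t)` with `|W| ≤ A`: if `ρ > 0` satisfies
`ρ³ ≥ (1+α)ρ + A` and a solution defined on `[t₀ - τ, ∞)` satisfies `|x(s)| ≤ ρ` on the
initial segment `[t₀ - τ, t₀]`, then `|x(t)| ≤ ρ` for all `t ≥ t₀`. -/
theorem suarez_schopf_forced_dissipative (α τ A ρ t₀ : ℝ) (W : ℝ → ℝ) (x : ℝ → ℝ)
    (hα : α ∈ Set.Ioo (0 : ℝ) 1) (hτ : 0 < τ) (hA : 0 ≤ A)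
    (hWcont : Continuous W) (hW : ∀ t : ℝ, |W t| ≤ A)
    (hρ : 0 < ρ) (hρ' : (1 + α) * ρ + A ≤ ρ ^ 3)
    (hcont : ContinuousOn x (Set.Ici (t₀ - τ)))
    (hderiv : ∀ t, t₀ ≤ t →
      HasDerivWithinAt x (x t - α * x (t - τ) - (x t) ^ 3 + W t) (Set.Ici t₀) t)
    (hinit : ∀ s ∈ Set.Icc (t₀ - τ) t₀, |x s| ≤ ρ) :
    ∀ t, t₀ ≤ t → |x t| ≤ ρ := by
  have hρ2 : 1 + α ≤ ρ ^ 2 := by nlinarith [hρ, hA, hρ']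
  have key : ∀ ε : ℝ, 0 < ε → ∀ t, t₀ ≤ t → |x t| ≤ ρ + ε := by
    intro ε hε t₁ ht₁
    by_contra hcon
    push_neg at hcon
    set S := {t | t ∈ Set.Icc t₀ t₁ ∧ ρ + ε ≤ |x t|} with hSdef
    have hsub : Set.Icc t₀ t₁ ⊆ Set.Ici (t₀ - τ) := fun s hs => le_trans (by linarith) hs.1
    have hScl : IsClosed S := by
      have habs : ContinuousOn (fun t => |x t|) (Set.Icc t₀ t₁) := (hcont.mono hsub).abs
      have : S = Set.Icc t₀ t₁ ∩ (fun t => |x t|) ⁻¹' Set.Ici (ρ + ε) := by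
        ext s; simp [hSdef, Set.mem_Icc, and_assoc]
      rw [this]
      exact habs.preimage_isClosed_of_isClosed isClosed_Icc isClosed_Ici
    have hSne : S.Nonempty := ⟨t₁, ⟨ht₁, le_refl t₁⟩, hcon.le⟩
    have hSbd : BddBelow S := ⟨t₀, fun s hs => hs.1.1⟩
    set T := sInf S with hTdef
    have hTS : T ∈ S := hScl.csInf_mem hSne hSbd
    have hT1 : T ≤ t₁ := hTS.1.2
    have hT0 : t₀ < T := by
      rcases lt_or_eq_of_le hTS.1.1 with h | h
      · exact h
      · exfalso
        have := hinit t₀ ⟨by linarith, le_refl t₀⟩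
        rw [h] at this
        linarith [hTS.2]
    have hlt : ∀ s, t₀ ≤ s → s < T → |x s| < ρ + ε := by
      intro s hs hsT
      by_contra h
      push_neg at h
      exact absurd (csInf_le hSbd ⟨⟨hs, by linarith⟩, h⟩) (not_le.mpr hsT)
    -- |x T| ≤ ρ + ε via continuity from the left
    have hca : ContinuousAt x T := hcont.continuousAt (Ici_mem_nhds (by linarith))
    have htend : Filter.Tendsto (fun s => |x s|) (nhdsWithin T (Set.Iio T)) (nhds |x T|) :=
      ((continuous_abs.continuousAt.comp hca).mono_left nhdsWithin_le_nhds)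
    have hev : ∀ᶠ s in nhdsWithin T (Set.Iio T), |x s| ≤ ρ + ε := by
      filter_upwards [self_mem_nhdsWithin,
        (eventually_gt_nhds hT0).filter_mono nhdsWithin_le_nhds] with s hs1 hs2
      exact (hlt s hs2.le hs1).le
    have hxTle : |x T| ≤ ρ + ε := le_of_tendsto htend hev
    have hxT : |x T| = ρ + ε := le_antisymm hxTle hTS.2
    -- bound on the delayed term
    have hτbound : |x (T - τ)| ≤ ρ + ε := by
      by_cases h : T - τ < t₀
      · exact (hinit (T - τ) ⟨by linarith [hTS.1.1], h.le⟩).trans (by linarith)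
      · exact (hlt (T - τ) (not_lt.1 h) (by linarith)).le
    have hf : (1 + α) * (ρ + ε) + A < (ρ + ε) ^ 3 := by
      nlinarith [hρ', hρ2, hε, hρ, mul_pos hε hε, mul_pos hρ hε, hA,
        mul_pos (mul_pos hε hε) hε, mul_pos (mul_pos hρ hε) hε]
    set d := x T - α * x (T - τ) - (x T) ^ 3 + W T with hddef
    have hd : HasDerivAt x d T :=
      (hderiv T hTS.1.1).hasDerivAt (Ici_mem_nhds hT0)
    have htds : Filter.Tendsto (slope x T) (nhdsWithin T (Set.Iio T)) (nhds d) :=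
      (hasDerivAt_iff_tendsto_slope.1 hd).mono_left
        (nhdsWithin_mono T (fun s hs => ne_of_lt hs))
    have hτ' := abs_le.1 hτbound
    have hW' := abs_le.1 (hW T)
    rcases (abs_eq (by positivity)).1 hxT with h1 | h1
    · -- x T = ρ + ε, derivative is negative, but slope from left nonneg
      have hdneg : d < 0 := by
        rw [hddef, h1]
        nlinarith [hf, hτ'.1, hW'.2, mul_le_mul_of_nonneg_left hτ'.1 hα.1.le]
      have : 0 ≤ d := by
        refine ge_of_tendsto htds ?_
        filter_upwards [self_mem_nhdsWithin,
          (eventually_gt_nhds hT0).filter_mono nhdsWithin_le_nhds] with s hs1 hs2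
        rw [slope_def_field]
        apply div_nonneg_of_nonpos
        · have := (hlt s hs2.le hs1).trans_le (le_of_eq h1.symm)
          linarith [le_abs_self (x s)]
        · simp only [Set.mem_Iio] at hs1; linarith
      linarith
    · -- x T = -(ρ + ε), derivative is positive, but slope from left nonpos
      have hdpos : 0 < d := by
        rw [hddef, h1]
        nlinarith [hf, hτ'.2, hW'.1, mul_le_mul_of_nonneg_left hτ'.2 hα.1.le]
      have : d ≤ 0 := by
        refine le_of_tendsto htds ?_
        filter_upwards [self_mem_nhdsWithin,
          (eventually_gt_nhds hT0).filter_mono nhdsWithin_le_nhds] with s hs1 hs2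
        rw [slope_def_field]
        apply div_nonpos_of_nonneg_of_nonpos
        · have hxs : -(ρ + ε) < x s := by
            have := hlt s hs2.le hs1
            linarith [neg_abs_le (x s)]
          rw [h1]; linarith
        · simp only [Set.mem_Iio] at hs1; linarith
      linarith
  intro t ht
  exact le_of_forall_pos_le_add fun ε hε => key ε hε t ht
end
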